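/- arXiv:0907.0044 — 2 statements merged into one kernel-verified Lean document; each statement's English description precedes it below -/
import Mathlib

section
/- For any integer ℓ ≥ 2, the identity Σ_{r=0}^{ℓ} Σ_{j=0}^{r} (−1)^{j+r} C(r−2, j) · h_{ℓ−r} · g_{1^{r−j}} = 0 holds in the ring of symmetric functions, where g_{1^m} = Σ_{t=1}^{m} binom(m−1, t−1) e_t for m ≥ 1, g_{1^0} = 1, h_0 = 1, and C(n, j) = n(n−1)⋯(n−j+1)/j! denotes the generalized binomial coefficient for a (possibly negative) integer n. -/
open scoped Classical

namespace AffineKTheory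

noncomputable instance : Nonempty YoungDiagram := ⟨⊥⟩
/-! ## The ring of symmetric functions, realized as `Λ ≅ ℤ[h₁, h₂, …]`,
the free polynomial ring on the complete homogeneous symmetric functions
(variable `n` is `h_{n+1}`). -/

abbrev SymFunc := MvPolynomial ℕ ℤ

/-- The complete homogeneous symmetric function `h_r` (`h_0 = 1`). -/
noncomputable def hSym : ℕ → SymFunc
  | 0 => 1
  | n + 1 => MvPolynomial.X n

/-- The elementary symmetric function
`e_n = Σ_{α ⊨ n} (-1)^{n - ℓ(α)} h_α` (sum over compositions of `n`). -/
noncomputable def eSym (n : ℕ) : SymFunc :=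
  ∑ c : Composition n, (-1 : SymFunc) ^ (n - c.length) * (c.blocks.map hSym).prod

/-- `h_λ = h_{λ_1} ⋯ h_{λ_ℓ}` for a partition `λ`. -/
noncomputable def hProd (lam : YoungDiagram) : SymFunc :=
  (lam.rowLens.map hSym).prod

/-- `Λ^{(k)} = ℤ[h_1, …, h_k]` as a subalgebra of `Λ`. -/
noncomputable def LambdaK (k : ℕ) : Subalgebra ℤ SymFunc :=
  MvPolynomial.supported ℤ {n : ℕ | n < k}

/-- The exponent vector of the monomial `h_λ` in the `h`-presentation of `Λ`. -/
noncomputable def hExp (lam : YoungDiagram) : ℕ →₀ ℕ :=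
  Multiset.toFinsupp ((lam.rowLens : Multiset ℕ).map fun r => r - 1)

/-- The coefficient of `h_λ` in the expansion of `p ∈ Λ` in the basis `{h_λ}`. -/
noncomputable def hCoeff (p : SymFunc) (lam : YoungDiagram) : ℤ :=
  MvPolynomial.coeff (hExp lam) p

/-- The Hall inner product `⟨p, F⟩` of `p ∈ Λ` with a (degree-wise finite) formal series
`F = Σ_ν F(ν) m_ν` in the monomial symmetric functions, characterized by
`⟨h_λ, m_μ⟩ = δ_{λμ}`. -/
noncomputable def hallPair (p : SymFunc) (F : YoungDiagram → ℤ) : ℤ :=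
  ∑ᶠ ν : YoungDiagram, hCoeff p ν * F ν

/-- The column dual Grothendieck polynomial `g_{1^m} = Σ_{j=1}^m binom(m-1, j-1) e_j`
(`g_{1^0} = 1`). -/
noncomputable def gColumn (m : ℕ) : SymFunc :=
  if m = 0 then 1 else ∑ j ∈ Finset.Icc 1 m, (((m - 1).choose (j - 1) : ℤ)) • eSym j

/-- The algebra endomorphism `Ω` of `Λ` with `Ω(h_ℓ) = Σ_{j=1}^ℓ binom(ℓ-1, j-1) e_j`. -/
noncomputable def OmegaMap : SymFunc →ₐ[ℤ] SymFunc :=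
  MvPolynomial.aeval fun n => gColumn (n + 1)

/-- Generalized binomial coefficient `C(n, j)` for an arbitrary integer `n`. -/
def genBinom (n : ℤ) (j : ℕ) : ℤ :=
  if 0 ≤ n then (n.toNat.choose j : ℤ) else (-1) ^ j * ((j + (-n - 1).toNat).choose j : ℤ)




section Auxiliary

open Finset

/-! ### Sums over compositions via lists of positive integers -/

/-- Lists with positive entries summing to `n`, as a finset. -/
noncomputable def posLists (n : ℕ) : Finset (List ℕ) :=
  (Finset.univ : Finset (Composition n)).image Composition.blocks

lemma mem_posLists {n : ℕ} {l : List ℕ} :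
    l ∈ posLists n ↔ l.sum = n ∧ ∀ i ∈ l, i ≠ 0 := by
  constructor
  · rintro hl
    obtain ⟨c, -, rfl⟩ := Finset.mem_image.1 hl
    exact ⟨c.blocks_sum, fun i hi => (c.blocks_pos hi).ne'⟩
  · rintro ⟨h1, h2⟩
    exact Finset.mem_image.2 ⟨⟨l, fun hi => Nat.pos_of_ne_zero (h2 _ hi), h1⟩,
      Finset.mem_univ _, rfl⟩

lemma blocks_injective (n : ℕ) : Function.Injective (Composition.blocks (n := n)) := by
  intro c d h
  cases c; cases d; simpa using h

lemma eSym_eq_posLists (n : ℕ) :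
    eSym n = ∑ l ∈ posLists n, (-1 : SymFunc) ^ (n - l.length) * (l.map hSym).prod := by
  rw [posLists, Finset.sum_image (fun c _ d _ h => blocks_injective n h)]
  rfl

lemma eSym_zero : eSym 0 = 1 := by
  rw [eSym_eq_posLists]
  have : posLists 0 = {[]} := by
    ext l
    simp only [mem_posLists, Finset.mem_singleton]
    constructor
    · rintro ⟨h1, h2⟩
      cases l with
      | nil => rfl
      | cons a t =>
        exact absurd (by simpa using h1) (by simp [h2 a List.mem_cons_self])
    · rintro rfl; exact ⟨rfl, by simp⟩
  simp [this, hSym]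

lemma posLists_peel (n : ℕ) (hn : n ≠ 0) :
    posLists n = (Finset.Icc 1 n).biUnion (fun k => (posLists (n - k)).image (List.cons k)) := by
  ext l
  simp only [mem_posLists, Finset.mem_biUnion, Finset.mem_image, Finset.mem_Icc]
  constructor
  · rintro ⟨h1, h2⟩
    cases l with
    | nil => exact absurd h1.symm hn
    | cons a t =>
      have ha : a ≠ 0 := h2 a List.mem_cons_self
      have hs : a + t.sum = n := by simpa using h1
      refine ⟨a, ⟨Nat.one_le_iff_ne_zero.2 ha, by omega⟩, t,
        ⟨by omega, fun i hi => h2 i (List.mem_cons_of_mem a hi)⟩, rfl⟩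
  · rintro ⟨k, ⟨hk1, hk2⟩, t, ht, rfl⟩
    obtain ⟨ht1, ht2⟩ := ht
    refine ⟨by simp [ht1]; omega, ?_⟩
    intro i hi
    rcases List.mem_cons.1 hi with rfl | hi
    · omega
    · exact ht2 i hi

lemma length_le_sum {l : List ℕ} (h : ∀ i ∈ l, i ≠ 0) : l.length ≤ l.sum := by
  induction l with
  | nil => simp
  | cons a t ih =>
    have := h a List.mem_cons_self
    have := ih (fun i hi => h i (List.mem_cons_of_mem a hi))
    simp only [List.length_cons, List.sum_cons]
    omega

/-- Recursion for the elementary symmetric functions, obtained by peeling the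
first block of a composition. -/
lemma eSym_rec (n : ℕ) (hn : n ≠ 0) :
    eSym n = ∑ k ∈ Finset.Icc 1 n, ((-1 : ℤ) ^ (k - 1)) • (hSym k * eSym (n - k)) := by
  rw [eSym_eq_posLists, posLists_peel n hn, Finset.sum_biUnion]
  · refine Finset.sum_congr rfl fun k hk => ?_
    obtain ⟨hk1, hk2⟩ := Finset.mem_Icc.1 hk
    rw [Finset.sum_image (by intro a _ b _ h; simpa using h), eSym_eq_posLists,
      Finset.mul_sum, zsmul_eq_mul, Finset.mul_sum]
    refine Finset.sum_congr rfl fun l hl => ?_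
    obtain ⟨hl1, hl2⟩ := mem_posLists.1 hl
    have hlen : l.length ≤ n - k := hl1 ▸ length_le_sum hl2
    have hpow : n - (k :: l).length = (k - 1) + ((n - k) - l.length) := by
      simp only [List.length_cons]; omega
    rw [hpow, pow_add]
    simp only [List.map_cons, List.prod_cons]
    push_cast
    ring
  · intro a ha b hb hab
    simp only [Function.onFun]
    rw [Finset.disjoint_left]
    rintro l hla hlb
    obtain ⟨t, -, rfl⟩ := Finset.mem_image.1 hla
    obtain ⟨t', -, h⟩ := Finset.mem_image.1 hlb
    exact hab (List.cons_eq_cons.1 h).1.symm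

lemma eSym_rec' (n : ℕ) (hn : n ≠ 0) :
    eSym n = ∑ i ∈ Finset.range n, ((-1 : ℤ) ^ i) • (hSym (1 + i) * eSym (n - (1 + i))) := by
  rw [eSym_rec n hn, ← Finset.Ico_add_one_right_eq_Icc, Finset.sum_Ico_eq_sum_range]
  simp only [Nat.add_sub_cancel_left, Nat.succ_sub_one, Nat.add_sub_cancel]

/-- Newton's identity `Σ_{r=0}^{n} (-1)^r h_{n-r} e_r = 0` for `n ≥ 1`. -/
lemma newton (n : ℕ) (hn : n ≠ 0) :
    ∑ r ∈ Finset.range (n + 1), ((-1 : ℤ) ^ r) • (hSym (n - r) * eSym r) = 0 := by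
  rw [Finset.sum_range_succ]
  have h0 : hSym (n - n) = 1 := by simp [hSym]
  rw [h0, one_mul]
  have hrefl : ∑ r ∈ Finset.range n, ((-1 : ℤ) ^ r) • (hSym (n - r) * eSym r)
      = ∑ i ∈ Finset.range n, ((-1 : ℤ) ^ (n - 1 - i)) • (hSym (n - (n - 1 - i)) * eSym (n - 1 - i)) :=
    (Finset.sum_range_reflect _ n).symm
  have hterm : ∀ i ∈ Finset.range n,
      ((-1 : ℤ) ^ (n - 1 - i)) • (hSym (n - (n - 1 - i)) * eSym (n - 1 - i))
      = -((-1 : ℤ) ^ n) • (((-1 : ℤ) ^ i) • (hSym (1 + i) * eSym (n - (1 + i)))) := by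
    intro i hi
    have hi' := Finset.mem_range.1 hi
    have e1 : n - (n - 1 - i) = 1 + i := by omega
    have e2 : n - 1 - i = n - (1 + i) := by omega
    have hs : ((-1 : ℤ)) ^ (n - 1 - i) = -((-1 : ℤ) ^ n) * (-1 : ℤ) ^ i := by
      have : ((-1 : ℤ)) ^ ((n - 1 - i) + (1 + i)) = (-1 : ℤ) ^ n := by
        congr 1; omega
      rw [pow_add] at this
      have h2 : ((-1 : ℤ)) ^ (1 + i) = -(-1 : ℤ) ^ i := by
        rw [pow_add]; ring
      rw [h2] at this
      have := congrArg (· * (-(-1 : ℤ) ^ i)) this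
      rw [mul_assoc] at this
      have hsq : (-(-1 : ℤ) ^ i) * (-(-1 : ℤ) ^ i) = 1 := by
        rw [neg_mul_neg, ← pow_add, ← two_mul, pow_mul]; norm_num
      rw [hsq, mul_one] at this
      rw [this]; ring
    rw [hs, e1, e2, smul_smul]
  rw [hrefl, Finset.sum_congr rfl hterm, ← Finset.smul_sum, ← eSym_rec' n hn]
  simp

open Polynomial in
/-- `Σ_{j=0}^{a} (-1)^j C(a,j) C(a+1-j,b) = [b = a] + [b = a+1]`. -/
lemma binom_alt (a b : ℕ) :
    ∑ j ∈ Finset.range (a + 1), (-1 : ℤ) ^ j * (a.choose j) * ((a + 1 - j).choose b)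
      = (if b = a then 1 else 0) + (if b = a + 1 then 1 else 0) := by
  have key : ∑ j ∈ Finset.range (a + 1),
      Polynomial.C ((-1 : ℤ) ^ j * (a.choose j)) * (X + 1) ^ (a + 1 - j)
      = X ^ a + X ^ (a + 1) := by
    have h1 : ∀ j ∈ Finset.range (a + 1),
        Polynomial.C ((-1 : ℤ) ^ j * (a.choose j)) * (X + 1) ^ (a + 1 - j)
        = ((-1 : Polynomial ℤ) ^ j * (X + 1) ^ (a - j) * (a.choose j : Polynomial ℤ)) * (X + 1) := by
      intro j hj
      have hj' := Finset.mem_range.1 hj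
      have : a + 1 - j = (a - j) + 1 := by omega
      rw [this, pow_succ]
      simp only [Polynomial.C_mul, Polynomial.C_pow, Polynomial.C_neg, Polynomial.C_1,
        Polynomial.C_eq_natCast]
      ring
    rw [Finset.sum_congr rfl h1, ← Finset.sum_mul, ← add_pow]
    ring_nf
  have := congrArg (fun p => Polynomial.coeff p b) key
  simp only [Polynomial.finset_sum_coeff, Polynomial.coeff_C_mul,
    Polynomial.coeff_X_add_one_pow, Polynomial.coeff_add, Polynomial.coeff_X_pow] at this
  rw [← this]

end Auxiliary

/-- The key lemma: the inner alternating sum over `j` collapses to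
`(-1)^r (e_r + e_{r-1})` for `r ≥ 1`. -/
lemma key_inner (r : ℕ) (hr : 1 ≤ r) :
    ∑ j ∈ Finset.range (r + 1), ((-1 : ℤ) ^ (j + r) * genBinom ((r : ℤ) - 2) j) • gColumn (r - j)
      = ((-1 : ℤ) ^ r) • (eSym r + eSym (r - 1)) := by
  rcases Nat.lt_or_ge r 2 with hr2 | hr2
  · -- r = 1
    interval_cases r
    rw [Finset.sum_range_succ, Finset.sum_range_succ, Finset.sum_range_zero]
    have hg0 : genBinom ((1 : ℤ) - 2) 0 = 1 := by decide
    have hg1 : genBinom ((1 : ℤ) - 2) 1 = -1 := by decide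
    have hc0 : gColumn 0 = 1 := by simp [gColumn]
    have hc1 : gColumn 1 = eSym 1 := by simp [gColumn]
    simp only [Nat.cast_one, Nat.sub_zero, Nat.sub_self, zero_add, pow_one, pow_zero]
    rw [hg0, hg1, hc0, hc1, eSym_zero]
    simp only [smul_add, neg_smul, one_smul, mul_one, one_mul, neg_neg, zero_add]
    norm_num
  · -- r ≥ 2
    have hgen : ∀ j, genBinom ((r : ℤ) - 2) j = ((r - 2).choose j : ℤ) := by
      intro j
      rw [genBinom, if_pos (by omega)]
      congr 2
      omega
    rw [Finset.sum_range_succ]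
    have hlast : ((-1 : ℤ) ^ (r + r) * genBinom ((r : ℤ) - 2) r) • gColumn (r - r) = 0 := by
      rw [hgen, Nat.choose_eq_zero_of_lt (by omega)]
      simp
    rw [hlast, add_zero]
    have hstep : ∀ j ∈ Finset.range r,
        ((-1 : ℤ) ^ (j + r) * genBinom ((r : ℤ) - 2) j) • gColumn (r - j)
        = ∑ s ∈ Finset.Icc 1 r,
            ((-1 : ℤ) ^ (j + r) * ((r - 2).choose j : ℤ) * ((r - j - 1).choose (s - 1) : ℤ)) • eSym s := by
      intro j hj
      have hj' := Finset.mem_range.1 hj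
      rw [hgen, gColumn, if_neg (by omega), Finset.smul_sum,
        Finset.sum_subset (Finset.Icc_subset_Icc_right (by omega : r - j ≤ r))]
      · refine Finset.sum_congr rfl fun s hs => ?_
        rw [smul_smul]
      · intro s hs hs'
        obtain ⟨hs1, hs2⟩ := Finset.mem_Icc.1 hs
        have hlt : r - j < s := by
          by_contra hcon
          exact hs' (Finset.mem_Icc.2 ⟨hs1, by omega⟩)
        rw [Nat.choose_eq_zero_of_lt (show r - j - 1 < s - 1 by omega)]
        simp
    rw [Finset.sum_congr rfl hstep, Finset.sum_comm]
    have hscal : ∀ s ∈ Finset.Icc 1 r,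
        ∑ j ∈ Finset.range r,
            ((-1 : ℤ) ^ (j + r) * ((r - 2).choose j : ℤ) * ((r - j - 1).choose (s - 1) : ℤ)) • eSym s
        = ((-1 : ℤ) ^ r * ((if s = r - 1 then 1 else 0) + (if s = r then 1 else 0))) • eSym s := by
      intro s hs
      obtain ⟨hs1, hs2⟩ := Finset.mem_Icc.1 hs
      rw [← Finset.sum_smul]
      congr 1
      have hsum : ∑ j ∈ Finset.range r,
            ((-1 : ℤ) ^ (j + r) * ((r - 2).choose j : ℤ) * ((r - j - 1).choose (s - 1) : ℤ))
          = (-1 : ℤ) ^ r * ∑ j ∈ Finset.range r,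
            ((-1 : ℤ) ^ j * ((r - 2).choose j : ℤ) * ((r - j - 1).choose (s - 1) : ℤ)) := by
        rw [Finset.mul_sum]
        refine Finset.sum_congr rfl fun j hj => ?_
        rw [pow_add]
        ring
      rw [hsum]
      congr 1
      have hrange : Finset.range r = Finset.range ((r - 2 + 1) + 1) := by
        congr 1
        omega
      rw [hrange, Finset.sum_range_succ, Nat.choose_eq_zero_of_lt (by omega : r - 2 < r - 2 + 1)]
      rw [Nat.cast_zero, mul_zero, zero_mul, add_zero]
      have harg : ∀ j ∈ Finset.range (r - 2 + 1),
          (-1 : ℤ) ^ j * ((r - 2).choose j : ℤ) * ((r - j - 1).choose (s - 1) : ℤ)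
          = (-1 : ℤ) ^ j * ((r - 2).choose j : ℤ) * (((r - 2) + 1 - j).choose (s - 1) : ℤ) := by
        intro j hj
        have hj' := Finset.mem_range.1 hj
        congr 3
        omega
      rw [Finset.sum_congr rfl harg, binom_alt (r - 2) (s - 1)]
      congr 1
      · exact if_congr (by omega) rfl rfl
      · exact if_congr (by omega) rfl rfl
    rw [Finset.sum_congr rfl hscal]
    simp only [mul_add, add_smul, Finset.sum_add_distrib, mul_ite, mul_one, mul_zero,
      ite_smul, zero_smul]
    rw [Finset.sum_ite_eq' (Finset.Icc 1 r) (r - 1), Finset.sum_ite_eq' (Finset.Icc 1 r) r,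
      if_pos (Finset.mem_Icc.2 ⟨by omega, by omega⟩), if_pos (Finset.mem_Icc.2 ⟨by omega, le_refl r⟩),
      smul_add]
    abel

/-- For any integer `ℓ ≥ 2`, the identity
`Σ_{r=0}^{ℓ} Σ_{j=0}^{r} (-1)^{j+r} C(r-2, j) · h_{ℓ-r} · g_{1^{r-j}} = 0`
holds in the ring of symmetric functions, where `g_{1^m} = Σ_{t=1}^m binom(m-1, t-1) e_t`,
`g_{1^0} = 1`, `h_0 = 1`, and `C(n, j)` is the generalized binomial coefficient for a
(possibly negative) integer `n`. -/
theorem kNewton_identity (ℓ : ℕ) (hℓ : 2 ≤ ℓ) :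
    ∑ r ∈ Finset.range (ℓ + 1), ∑ j ∈ Finset.range (r + 1),
      ((-1 : ℤ) ^ (j + r) * genBinom ((r : ℤ) - 2) j) • (hSym (ℓ - r) * gColumn (r - j))
      = 0 := by
  have hℓ1 : ℓ ≠ 0 := by omega
  have hℓ2 : ℓ - 1 ≠ 0 := by omega
  rw [Finset.sum_range_succ']
  have hF0 : (∑ j ∈ Finset.range (0 + 1),
      ((-1 : ℤ) ^ (j + 0) * genBinom (((0 : ℕ) : ℤ) - 2) j) • (hSym (ℓ - 0) * gColumn (0 - j)))
      = hSym ℓ := by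
    rw [Finset.sum_range_one]
    norm_num [genBinom, gColumn]
  have hterm : ∀ i ∈ Finset.range ℓ,
      (∑ j ∈ Finset.range (i + 1 + 1),
        ((-1 : ℤ) ^ (j + (i + 1)) * genBinom (((i + 1 : ℕ) : ℤ) - 2) j)
          • (hSym (ℓ - (i + 1)) * gColumn (i + 1 - j)))
      = ((-1 : ℤ) ^ (i + 1)) • (hSym (ℓ - (i + 1)) * eSym (i + 1))
        + ((-1 : ℤ) ^ (i + 1)) • (hSym (ℓ - (i + 1)) * eSym i) := by
    intro i hi
    have h1 : ∀ j ∈ Finset.range (i + 1 + 1),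
        ((-1 : ℤ) ^ (j + (i + 1)) * genBinom (((i + 1 : ℕ) : ℤ) - 2) j)
          • (hSym (ℓ - (i + 1)) * gColumn (i + 1 - j))
        = hSym (ℓ - (i + 1)) * (((-1 : ℤ) ^ (j + (i + 1))
            * genBinom (((i + 1 : ℕ) : ℤ) - 2) j) • gColumn (i + 1 - j)) :=
      fun j _ => (mul_smul_comm _ _ _).symm
    rw [Finset.sum_congr rfl h1, ← Finset.mul_sum, key_inner (i + 1) (by omega),
      Nat.add_sub_cancel, mul_smul_comm, mul_add, smul_add]
  rw [Finset.sum_congr rfl hterm, hF0, Finset.sum_add_distrib]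
  have hA : ∑ i ∈ Finset.range ℓ, ((-1 : ℤ) ^ (i + 1)) • (hSym (ℓ - (i + 1)) * eSym (i + 1))
      = -hSym ℓ := by
    have hnewt := newton ℓ hℓ1
    rw [Finset.sum_range_succ'] at hnewt
    simp only [pow_zero, one_smul, Nat.sub_zero, eSym_zero, mul_one] at hnewt
    exact eq_neg_of_add_eq_zero_left hnewt
  have hB : ∑ i ∈ Finset.range ℓ, ((-1 : ℤ) ^ (i + 1)) • (hSym (ℓ - (i + 1)) * eSym i)
      = 0 := by
    have h2 := newton (ℓ - 1) hℓ2
    have hr : Finset.range ((ℓ - 1) + 1) = Finset.range ℓ := by congr 1; omega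
    rw [hr] at h2
    have h3 : ∀ i ∈ Finset.range ℓ,
        ((-1 : ℤ) ^ (i + 1)) • (hSym (ℓ - (i + 1)) * eSym i)
        = -(((-1 : ℤ) ^ i) • (hSym ((ℓ - 1) - i) * eSym i)) := by
      intro i hi
      have he : ℓ - (i + 1) = (ℓ - 1) - i := by omega
      rw [he, pow_succ, mul_neg_one, neg_smul]
    rw [Finset.sum_congr rfl h3, Finset.sum_neg_distrib, h2, neg_zero]
  rw [hA, hB]
  simp

end AffineKTheory
end

section
/- For any affine set-valued r-strip (γ/β, ρ), the residue sets Res(γ/β) and Res(β/ρ) are disjoint; consequently the cells of γ/ρ occupy exactly r distinct residues. -/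
open scoped Classical

namespace AffineKTheory

/-! ## Cells, hooks, cores, residues -/

/-- Hook length of the cell `(r, c)` in the diagram `γ`. -/
def hookLen (γ : YoungDiagram) (r c : ℕ) : ℕ :=
  (γ.rowLen r - c) + (γ.colLen c - r) - 1

/-- A `p`-core: a diagram none of whose cells has hook length `p`. -/
def IsCore (p : ℕ) (γ : YoungDiagram) : Prop :=
  ∀ c : ℕ × ℕ, c ∈ γ → hookLen γ c.1 c.2 ≠ p

/-- The `(k+1)`-residue of a cell.  (Rows of the Ferrers shape are indexed so that the cell
directly above `(r, c)` -- in the Ferrers sense of the next, shorter, row -- is `(r+1, c)`.) -/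
def residue (k : ℕ) (c : ℕ × ℕ) : ZMod (k + 1) :=
  (c.2 : ZMod (k + 1)) - (c.1 : ZMod (k + 1))

/-- A removable corner of `γ`: a cell of `γ` with no cell above it nor to its right. -/
def Removable (γ : YoungDiagram) (c : ℕ × ℕ) : Prop :=
  c ∈ γ ∧ (c.1 + 1, c.2) ∉ γ ∧ (c.1, c.2 + 1) ∉ γ

/-- An addable corner of `γ`: a cell outside `γ` whose addition again yields a partition shape. -/
def Addable (γ : YoungDiagram) (c : ℕ × ℕ) : Prop :=
  c ∉ γ ∧ ∀ d : ℕ × ℕ, d ≤ c → d ≠ c → d ∈ γ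

/-- A cell is `γ`-blocked if it lies below a cell of `γ`. -/
def Blocked (γ : YoungDiagram) (c : ℕ × ℕ) : Prop :=
  (c.1 + 1, c.2) ∈ γ

/-- The number of cells of `γ` in row `i` whose hook length is at most `k`:
the `i`-th part of `𝔭(γ)`. -/
noncomputable def pRow (k : ℕ) (γ : YoungDiagram) (i : ℕ) : ℕ :=
  (γ.cells.filter (fun c => c.1 = i ∧ hookLen γ c.1 c.2 ≤ k)).card

/-- The number of cells of `γ` with `k`-bounded hook length, i.e. `|𝔭(γ)|`. -/
noncomputable def pSize (k : ℕ) (γ : YoungDiagram) : ℕ :=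
  (γ.cells.filter (fun c => hookLen γ c.1 c.2 ≤ k)).card

/-- A `k`-bounded partition: all parts at most `k`. -/
def IsKBounded (k : ℕ) (lam : YoungDiagram) : Prop :=
  ∀ i, lam.rowLen i ≤ k

/-- `𝔭(γ)`: the `k`-bounded partition obtained from a `(k+1)`-core `γ` by deleting every cell of
hook length greater than `k` and reading off row lengths. -/
noncomputable def pPart (k : ℕ) (γ : YoungDiagram) : YoungDiagram :=
  Classical.epsilon fun lam => ∀ i, lam.rowLen i = pRow k γ i

/-- `𝔠(λ)`: the unique `(k+1)`-core corresponding to the `k`-bounded partition `λ` under the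
bijection `𝔭`. -/
noncomputable def coreOf (k : ℕ) (lam : YoungDiagram) : YoungDiagram :=
  Classical.epsilon fun γ => IsCore (k + 1) γ ∧ ∀ i, pRow k γ i = lam.rowLen i

/-- The `k`-conjugate `λ^{ω_k} = 𝔭(𝔠(λ)')` of a `k`-bounded partition. -/
noncomputable def kConj (k : ℕ) (lam : YoungDiagram) : YoungDiagram :=
  pPart k ((coreOf k lam).transpose)

/-- A `k`-bounded composition: a list of parts, each between `1` and `k`. -/
def IsKBoundedComp (k : ℕ) (α : List ℕ) : Prop :=
  ∀ a ∈ α, 1 ≤ a ∧ a ≤ k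

/-- Dominance order on partitions. -/
def Dominates (mu lam : YoungDiagram) : Prop :=
  mu.card = lam.card ∧
    ∀ n : ℕ, ∑ i ∈ Finset.range n, lam.rowLen i ≤ ∑ i ∈ Finset.range n, mu.rowLen i


/-! ## Strips -/

/-- `γ/β` is a horizontal strip: `β ⊆ γ` with at most one cell of `γ/β` in each column. -/
def IsHorizontalStrip (β γ : YoungDiagram) : Prop :=
  β ≤ γ ∧ ∀ c d : ℕ × ℕ, c ∈ γ → c ∉ β → d ∈ γ → d ∉ β → c.2 = d.2 → c = d

/-- `Res(γ/β)`: the set of residues of the cells of `γ/β`. -/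
noncomputable def resSet (k : ℕ) (β γ : YoungDiagram) : Finset (ZMod (k + 1)) :=
  (γ.cells \ β.cells).image (residue k)

/-- An affine `r`-strip `γ/β` (for `0 ≤ r ≤ k`): a horizontal strip of `(k+1)`-cores with
`|𝔭(γ)| = |𝔭(β)| + r` occupying exactly `r` distinct residues. -/
def IsAffineStrip (k r : ℕ) (β γ : YoungDiagram) : Prop :=
  r ≤ k ∧ IsCore (k + 1) β ∧ IsCore (k + 1) γ ∧ IsHorizontalStrip β γ ∧
  pSize k γ = pSize k β + r ∧ (resSet k β γ).card = r

/-- An affine set-valued `r`-strip `(γ/β, ρ)` (for `0 ≤ r ≤ k`), with `(k+1)`-cores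
`ρ ⊆ β ⊆ γ`:  (asv1) `γ/ρ` is a horizontal strip; (asv2) `γ/β` is an affine `(r-m)`-strip
where `m = |Res(β/ρ)|`; (asv3) `β/ρ` consists of `β`-removable corners, and if a cell of
residue `i` lies in `β/ρ` then every `β`-removable `i`-corner that is not `γ`-blocked lies
in `β/ρ`. -/
def IsAffineSVStrip (k r : ℕ) (ρ β γ : YoungDiagram) : Prop :=
  r ≤ k ∧ IsCore (k + 1) ρ ∧ ρ ≤ β ∧
  IsHorizontalStrip ρ γ ∧
  (resSet k ρ β).card ≤ r ∧
  IsAffineStrip k (r - (resSet k ρ β).card) β γ ∧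
  (∀ c : ℕ × ℕ, c ∈ β → c ∉ ρ → Removable β c) ∧
  (∀ c : ℕ × ℕ, c ∈ β → c ∉ ρ → ∀ c' : ℕ × ℕ, Removable β c' →
    residue k c' = residue k c → ¬ Blocked γ c' → c' ∉ ρ)

/-- The finite set of addable corners of `γ` with residue `i`. -/
noncomputable def addableSet (k : ℕ) (i : ZMod (k + 1)) (γ : YoungDiagram) : Finset (ℕ × ℕ) :=
  ((Finset.range (γ.colLen 0 + 1)).image fun r => (r, γ.rowLen r)).filter
    fun c => Addable γ c ∧ residue k c = i

/-- The operator `𝔰_i`: add to `γ` all its addable corners of residue `i`. -/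
noncomputable def addCorners (k : ℕ) (i : ZMod (k + 1)) (γ : YoungDiagram) : YoungDiagram where
  cells := γ.cells ∪ addableSet k i γ
  isLowerSet := by
    intro a b hba ha
    simp only [Finset.coe_union, Set.mem_union, Finset.mem_coe] at ha ⊢
    rcases ha with ha | ha
    · exact Or.inl (γ.isLowerSet hba ha)
    · have haddable : Addable γ a := ((Finset.mem_filter.mp ha).2).1
      by_cases hab : b = a
      · exact Or.inr (hab ▸ ha)
      · exact Or.inl (haddable.2 b hba hab)


/-! ## Auxiliary development: beads (first-column hook coordinates) -/

section Beads

/-- The "bead" of row `s`: `rowLen s - s`. -/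
noncomputable def rl (μ : YoungDiagram) (s : ℕ) : ℤ := (μ.rowLen s : ℤ) - s

/-- `x` is a bead value of `μ`. -/
def IsBead (μ : YoungDiagram) (x : ℤ) : Prop := ∃ s, rl μ s = x

lemma rl_anti (μ : YoungDiagram) {s t : ℕ} (h : s ≤ t) : rl μ t ≤ rl μ s - (t - s : ℕ) := by
  have h1 := μ.rowLen_anti s t h
  unfold rl
  have : (μ.rowLen t : ℤ) ≤ μ.rowLen s := by exact_mod_cast h1
  push_cast [Nat.cast_sub h]
  omega

lemma rl_strict_anti (μ : YoungDiagram) {s t : ℕ} (h : s < t) : rl μ t < rl μ s := by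
  have h2 := rl_anti μ (le_of_lt h)
  have : (1:ℤ) ≤ (t - s : ℕ) := by exact_mod_cast Nat.one_le_iff_ne_zero.2 (by omega)
  omega

lemma rl_inj (μ : YoungDiagram) {s t : ℕ} (h : rl μ s = rl μ t) : s = t := by
  rcases lt_trichotomy s t with h1 | h1 | h1
  · exact absurd h (ne_of_gt (rl_strict_anti μ h1))
  · exact h1
  · exact absurd h (ne_of_lt (rl_strict_anti μ h1))

lemma rowLen_eq_zero_of_ge (μ : YoungDiagram) {s : ℕ} (h : μ.colLen 0 ≤ s) : μ.rowLen s = 0 := by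
  by_contra hne
  have h1 : (s, 0) ∈ μ := YoungDiagram.mem_iff_lt_rowLen.2 (Nat.pos_of_ne_zero hne)
  have := YoungDiagram.mem_iff_lt_colLen.1 h1
  omega

lemma rl_neg_of_ge (μ : YoungDiagram) {s : ℕ} (h : μ.colLen 0 ≤ s) : rl μ s = -s := by
  unfold rl; rw [rowLen_eq_zero_of_ge μ h]; simp

lemma rl_le_rowLen_zero (μ : YoungDiagram) (s : ℕ) : rl μ s ≤ μ.rowLen 0 := by
  have := rl_anti μ (Nat.zero_le s)
  unfold rl at *
  omega

lemma rl_ge_neg (μ : YoungDiagram) (s : ℕ) : -(s:ℤ) ≤ rl μ s := by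
  unfold rl
  have : (0:ℤ) ≤ (μ.rowLen s : ℤ) := Int.ofNat_nonneg _
  omega

lemma hook_int (μ : YoungDiagram) {t c : ℕ} (h : (t, c) ∈ μ) :
    (hookLen μ t c : ℤ) = rl μ t - ((c:ℤ) + 1 - μ.colLen c) ∧ 1 ≤ hookLen μ t c := by
  have h1 : c < μ.rowLen t := YoungDiagram.mem_iff_lt_rowLen.1 h
  have h2 : t < μ.colLen c := YoungDiagram.mem_iff_lt_colLen.1 h
  unfold hookLen rl
  constructor
  · have e1 : ((μ.rowLen t - c : ℕ) : ℤ) = (μ.rowLen t : ℤ) - c := by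
      rw [Nat.cast_sub (le_of_lt h1)]
    have e2 : ((μ.colLen c - t : ℕ) : ℤ) = (μ.colLen c : ℤ) - t := by
      rw [Nat.cast_sub (le_of_lt h2)]
    have e3 : 1 ≤ (μ.rowLen t - c) + (μ.colLen c - t) := by omega
    rw [Nat.cast_sub e3, Nat.cast_add, e1, e2]
    ring
  · omega

lemma gp_not_bead (μ : YoungDiagram) {t c : ℕ} (h : (t, c) ∈ μ) :
    ¬ IsBead μ ((c:ℤ) + 1 - μ.colLen c) := by
  rintro ⟨s, hs⟩
  unfold rl at hs
  by_cases hlt : s < μ.colLen c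
  · have hmem : (s, c) ∈ μ := YoungDiagram.mem_iff_lt_colLen.2 hlt
    have h1 : c + 1 ≤ μ.rowLen s := YoungDiagram.mem_iff_lt_rowLen.1 hmem
    have h1' : (c:ℤ) + 1 ≤ (μ.rowLen s : ℤ) := by exact_mod_cast h1
    have h2 : (s:ℤ) ≤ (μ.colLen c : ℤ) - 1 := by
      have : (s:ℤ) < μ.colLen c := by exact_mod_cast hlt
      omega
    omega
  · push_neg at hlt
    have hmem : (s, c) ∉ μ := fun hc => absurd (YoungDiagram.mem_iff_lt_colLen.1 hc) (by omega)
    have h1 : μ.rowLen s ≤ c := by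
      by_contra hcon
      exact hmem (YoungDiagram.mem_iff_lt_rowLen.2 (by omega))
    have h1' : (μ.rowLen s : ℤ) ≤ c := by exact_mod_cast h1
    have h2 : (μ.colLen c : ℤ) ≤ s := by exact_mod_cast hlt
    omega

lemma gp_strict_mono (μ : YoungDiagram) {c c' : ℕ} (h : c < c') :
    ((c:ℤ) + 1 - μ.colLen c) < ((c':ℤ) + 1 - μ.colLen c') := by
  have h1 := μ.colLen_anti c c' (le_of_lt h)
  have h2 : (μ.colLen c' : ℤ) ≤ μ.colLen c := by exact_mod_cast h1
  have h3 : (c:ℤ) < c' := by exact_mod_cast h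
  omega

lemma cell_of_gap (μ : YoungDiagram) {t : ℕ} {x : ℤ} (hx : ¬ IsBead μ x) (hlt : x < rl μ t) :
    ∃ c : ℕ, (t, c) ∈ μ ∧ ((c:ℤ) + 1 - μ.colLen c) = x := by
  have hex : ∃ s : ℕ, rl μ s < x := by
    refine ⟨μ.colLen 0 + ((-x).toNat + 1), ?_⟩
    rw [rl_neg_of_ge μ (Nat.le_add_right _ _)]
    have h1 : -x ≤ ((-x).toNat : ℤ) := Int.self_le_toNat _
    have h2 : ((μ.colLen 0 + ((-x).toNat + 1) : ℕ) : ℤ) = (μ.colLen 0 : ℤ) + (-x).toNat + 1 := by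
      push_cast; ring
    rw [h2]
    have : (0:ℤ) ≤ (μ.colLen 0 : ℤ) := Int.ofNat_nonneg _
    omega
  classical
  let s0 := Nat.find hex
  have hs0 : rl μ s0 < x := Nat.find_spec hex
  have hs0min : ∀ s < s0, ¬ (rl μ s < x) := fun s hs => Nat.find_min hex hs
  have hgt : ∀ s < s0, x + 1 ≤ rl μ s := by
    intro s hs
    have h1 := hs0min s hs
    push_neg at h1
    rcases lt_or_eq_of_le h1 with h2 | h2
    · omega
    · exact absurd ⟨s, h2.symm⟩ hx
  have hs0pos : 1 ≤ s0 := by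
    by_contra hc
    push_neg at hc
    interval_cases s0
    · have h0 : rl μ 0 < x := hs0
      have h1 : rl μ t ≤ rl μ 0 := by
        rcases Nat.eq_zero_or_pos t with h | h
        · rw [h]
        · exact le_of_lt (rl_strict_anti μ h)
      omega
  have hs0negx : -x < (s0 : ℤ) := by
    by_contra hc
    push_neg at hc
    have h1 := rl_ge_neg μ s0
    have h2 : x ≤ rl μ s0 := by omega
    rcases lt_or_eq_of_le h2 with h3 | h3
    · omega
    · exact hx ⟨s0, h3.symm⟩
  have hcnn : 0 ≤ x + (s0:ℤ) - 1 := by omega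
  set cI : ℤ := x + (s0:ℤ) - 1 with hcI
  let c : ℕ := cI.toNat
  have hc : (c : ℤ) = x + (s0:ℤ) - 1 := Int.toNat_of_nonneg hcnn
  have hmem1 : (s0 - 1, c) ∈ μ := by
    have h1 : x + 1 ≤ rl μ (s0 - 1) := hgt _ (by omega)
    have h2 : ((s0 - 1 : ℕ) : ℤ) = (s0:ℤ) - 1 := by
      rw [Nat.cast_sub hs0pos]; simp
    unfold rl at h1
    rw [h2] at h1
    refine YoungDiagram.mem_iff_lt_rowLen.2 ?_
    have : (c:ℤ) < μ.rowLen (s0 - 1) := by omega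
    exact_mod_cast this
  have hmem2 : (s0, c) ∉ μ := by
    intro hcon
    have h1 := YoungDiagram.mem_iff_lt_rowLen.1 hcon
    have h1' : (c:ℤ) < μ.rowLen s0 := by exact_mod_cast h1
    unfold rl at hs0
    omega
  have hcol : (μ.colLen c : ℤ) = s0 := by
    have h1 : μ.colLen c ≤ s0 := by
      by_contra hcon
      exact hmem2 (YoungDiagram.mem_iff_lt_colLen.2 (by omega))
    have h2 : s0 - 1 < μ.colLen c := YoungDiagram.mem_iff_lt_colLen.1 hmem1
    have : μ.colLen c = s0 := by omega
    exact_mod_cast this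
  have hrowt : (t, c) ∈ μ := by
    have hd : 0 ≤ rl μ t - x := by omega
    set h' : ℕ := (rl μ t - x).toNat with hh'
    have hh : (h' : ℤ) = rl μ t - x := Int.toNat_of_nonneg hd
    have h1 : rl μ (t + h') ≤ rl μ t - h' := by
      have := rl_anti μ (Nat.le_add_right t h')
      have he : ((t + h' - t : ℕ) : ℤ) = (h' : ℤ) := by
        congr 1; omega
      omega
    have h2 : rl μ (t + h') < x := by
      rcases lt_or_eq_of_le (show rl μ (t+h') ≤ x by omega) with h3 | h3
      · exact h3
      · exact absurd ⟨t + h', h3⟩ hx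
    have h3 : s0 ≤ t + h' := by
      by_contra hcon
      exact (hs0min _ (by omega)) h2
    have h3' : (s0 : ℤ) ≤ (t:ℤ) + h' := by exact_mod_cast h3
    refine YoungDiagram.mem_iff_lt_rowLen.2 ?_
    have : (c:ℤ) < (μ.rowLen t : ℤ) := by
      unfold rl at hh
      omega
    exact_mod_cast this
  refine ⟨c, hrowt, ?_⟩
  omega

lemma core_bead_closed {p : ℕ} (hp : 1 ≤ p) {μ : YoungDiagram} (hcore : IsCore p μ)
    {x : ℤ} (hx : IsBead μ x) : IsBead μ (x - p) := by
  by_contra hgap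
  obtain ⟨t, ht⟩ := hx
  have hlt : x - p < rl μ t := by
    have : (1:ℤ) ≤ p := by exact_mod_cast hp
    omega
  obtain ⟨c, hc, hgpc⟩ := cell_of_gap μ hgap hlt
  obtain ⟨he, h1⟩ := hook_int μ hc
  have : (hookLen μ t c : ℤ) = p := by rw [he, hgpc, ht]; ring
  exact hcore (t, c) hc (by exact_mod_cast this)

lemma core_bead_ray {p : ℕ} (hp : 1 ≤ p) {μ : YoungDiagram} (hcore : IsCore p μ)
    {x : ℤ} (hx : IsBead μ x) (n : ℕ) : IsBead μ (x - n * p) := by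
  induction n with
  | zero => simpa using hx
  | succ m ih =>
      have := core_bead_closed hp hcore ih
      have he : x - (m:ℤ) * p - p = x - ((m+1 : ℕ) : ℤ) * p := by push_cast; ring
      rwa [he] at this

end Beads

/-! ## pSize via windows of beads -/

section Windows

noncomputable def gapWin (p : ℕ) (μ : YoungDiagram) (s : ℕ) : Finset ℤ :=
  (Finset.Ioo (rl μ s - p) (rl μ s)).filter (fun x => ¬ IsBead μ x)

lemma pRow_eq_gapWin {k : ℕ} (p : ℕ) (hp : p = k + 1) (μ : YoungDiagram) (s : ℕ) :
    pRow k μ s = (gapWin p μ s).card := by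
  unfold pRow gapWin
  refine Finset.card_bij (fun a _ => ((a.2 : ℤ) + 1 - μ.colLen a.2)) ?_ ?_ ?_
  · rintro ⟨t, c⟩ ha
    simp only [Finset.mem_filter, YoungDiagram.mem_cells] at ha
    obtain ⟨hmem, hrow, hhook⟩ := ha
    subst hrow
    obtain ⟨he, h1⟩ := hook_int μ hmem
    simp only [Finset.mem_filter, Finset.mem_Ioo]
    refine ⟨⟨?_, ?_⟩, gp_not_bead μ hmem⟩
    · have : (hookLen μ t c : ℤ) ≤ k := by exact_mod_cast hhook
      omega
    · have : (1:ℤ) ≤ (hookLen μ t c : ℤ) := by exact_mod_cast h1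
      omega
  · rintro ⟨t, c⟩ ha ⟨t', c'⟩ ha' he
    simp only [Finset.mem_filter, YoungDiagram.mem_cells] at ha ha'
    obtain ⟨_, hrow, _⟩ := ha
    obtain ⟨_, hrow', _⟩ := ha'
    dsimp only at he
    have : c = c' := by
      rcases lt_trichotomy c c' with h | h | h
      · exact absurd he (ne_of_lt (gp_strict_mono μ h))
      · exact h
      · exact absurd he (ne_of_gt (gp_strict_mono μ h))
    simp [Prod.ext_iff, hrow, hrow', this]
  · intro x hx
    simp only [Finset.mem_filter, Finset.mem_Ioo] at hx
    obtain ⟨⟨h1, h2⟩, hgap⟩ := hx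
    obtain ⟨c, hc, hgp⟩ := cell_of_gap μ hgap h2
    refine ⟨(s, c), ?_, ?_⟩
    · refine Finset.mem_filter.2 ⟨(YoungDiagram.mem_cells _).2 hc, rfl, ?_⟩
      obtain ⟨he, hpos⟩ := hook_int μ hc
      have : (hookLen μ s c : ℤ) ≤ k := by rw [he, hgp]; omega
      exact_mod_cast this
    · exact hgp

lemma gapWin_card {k : ℕ} (p : ℕ) (hp : p = k + 1) (μ : YoungDiagram) (s : ℕ) (N₂ : ℕ)
    (hN₂ : (μ.rowLen 0 : ℤ) + s + p ≤ N₂) :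
    ((gapWin p μ s).card : ℤ) =
      (p - 1 : ℤ) - ((Finset.range N₂).filter
        (fun s' => rl μ s - p < rl μ s' ∧ rl μ s' < rl μ s)).card := by
  have hsplit := Finset.card_filter_add_card_filter_not
    (s := Finset.Ioo (rl μ s - p) (rl μ s)) (p := fun x => IsBead μ x)
  have hIoo : (Finset.Ioo (rl μ s - p) (rl μ s)).card = p - 1 := by
    rw [Int.card_Ioo]
    omega
  have hbij : ((Finset.Ioo (rl μ s - p) (rl μ s)).filter (fun x => IsBead μ x)).card
      = ((Finset.range N₂).filter
        (fun s' => rl μ s - p < rl μ s' ∧ rl μ s' < rl μ s)).card := by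
    refine (Finset.card_bij (fun s' _ => rl μ s') ?_ ?_ ?_).symm
    · intro s' hs'
      simp only [Finset.mem_filter, Finset.mem_range] at hs'
      exact Finset.mem_filter.2 ⟨Finset.mem_Ioo.2 ⟨hs'.2.1, hs'.2.2⟩, ⟨s', rfl⟩⟩
    · intro a ha b hb he
      exact rl_inj μ he
    · intro x hx
      simp only [Finset.mem_filter, Finset.mem_Ioo] at hx
      obtain ⟨⟨h1, h2⟩, t, ht⟩ := hx
      refine ⟨t, ?_, ht⟩
      simp only [Finset.mem_filter, Finset.mem_range]
      refine ⟨?_, by rw [ht]; exact h1, by rw [ht]; exact h2⟩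
      have hb1 : rl μ t ≤ (μ.rowLen 0 : ℤ) := rl_le_rowLen_zero μ t
      have hb2 : -(s:ℤ) ≤ rl μ s := rl_ge_neg μ s
      have hb3 : (μ.rowLen t : ℤ) ≤ (μ.rowLen 0 : ℤ) := by
        exact_mod_cast μ.rowLen_anti 0 t (Nat.zero_le t)
      have hrl : rl μ t = (μ.rowLen t : ℤ) - t := rfl
      have hrow0 : (0:ℤ) ≤ (μ.rowLen t : ℤ) := Int.ofNat_nonneg _
      have : (t : ℤ) < N₂ := by
        rw [ht] at hrl
        omega
      exact_mod_cast this
  have h1 : ((gapWin p μ s).card : ℤ)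
      + ((Finset.Ioo (rl μ s - p) (rl μ s)).filter (fun x => IsBead μ x)).card
      = ((p:ℤ) - 1) := by
    unfold gapWin
    have h2 : (p:ℤ) - 1 = ((p - 1 : ℕ) : ℤ) := by
      have : 1 ≤ p := by omega
      push_cast [Nat.cast_sub this]
      ring
    rw [h2, ← hIoo]
    exact_mod_cast by omega
  rw [hbij] at h1
  omega

lemma pSize_eq_sum_pRow {k : ℕ} (μ : YoungDiagram) (N : ℕ) (hN : μ.colLen 0 ≤ N) :
    pSize k μ = ∑ s ∈ Finset.range N, pRow k μ s := by
  classical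
  unfold pSize pRow
  rw [← Finset.card_biUnion]
  · congr 1
    ext c
    simp only [Finset.mem_biUnion, Finset.mem_filter, Finset.mem_range]
    constructor
    · rintro ⟨hc, hh⟩
      refine ⟨c.1, ?_, hc, rfl, hh⟩
      have hmem : c ∈ μ := (YoungDiagram.mem_cells _).1 hc
      have : c.1 < μ.colLen 0 := by
        have h2 : c.1 < μ.colLen c.2 := YoungDiagram.mem_iff_lt_colLen.1 (by
          cases c; exact hmem)
        exact lt_of_lt_of_le h2 (μ.colLen_anti 0 c.2 (Nat.zero_le _))
      omega
    · rintro ⟨s, _, hc, _, hh⟩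
      exact ⟨hc, hh⟩
  · intro a _ b _ hab
    refine Finset.disjoint_left.2 ?_
    intro c hc hc'
    simp only [Finset.mem_filter] at hc hc'
    exact hab (hc.2.1 ▸ hc'.2.1.symm ▸ rfl)

lemma pSize_formula {k : ℕ} (p : ℕ) (hp : p = k + 1) (μ : YoungDiagram) (N N₂ : ℕ)
    (hN : μ.colLen 0 ≤ N) (hN₂ : ∀ s < N, (μ.rowLen 0 : ℤ) + s + p ≤ N₂) :
    (pSize k μ : ℤ) = ∑ s ∈ Finset.range N,
      ((p:ℤ) - 1 - ((Finset.range N₂).filter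
        (fun s' => rl μ s - p < rl μ s' ∧ rl μ s' < rl μ s)).card) := by
  rw [pSize_eq_sum_pRow μ N hN]
  push_cast
  refine Finset.sum_congr rfl ?_
  intro s hs
  rw [pRow_eq_gapWin p hp μ s]
  exact gapWin_card p hp μ s N₂ (hN₂ s (Finset.mem_range.1 hs))

end Windows


/-! ## The pair-counting identity for vertical strips -/

section Delta

/-- strip rows of a vertical pair -/
def VStrip (ρ γ : YoungDiagram) (s : ℕ) : Prop := ρ.rowLen s < γ.rowLen s

noncomputable def PP1 (ρ γ : YoungDiagram) (p N N₂ : ℕ) : Finset (ℕ × ℕ) :=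
  ((Finset.range N) ×ˢ (Finset.range N₂)).filter
    (fun q => VStrip ρ γ q.1 ∧ ¬ VStrip ρ γ q.2 ∧ rl ρ q.1 - rl ρ q.2 = (p:ℤ) - 1)

noncomputable def PP3 (ρ γ : YoungDiagram) (p N N₂ : ℕ) : Finset (ℕ × ℕ) :=
  ((Finset.range N) ×ˢ (Finset.range N₂)).filter
    (fun q => ¬ VStrip ρ γ q.1 ∧ VStrip ρ γ q.2 ∧ rl ρ q.1 - rl ρ q.2 = (p:ℤ))

lemma rowLen_mono {ρ γ : YoungDiagram} (hle : ρ ≤ γ) (s : ℕ) : ρ.rowLen s ≤ γ.rowLen s := by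
  by_contra h
  push_neg at h
  have h1 : (s, γ.rowLen s) ∈ ρ := YoungDiagram.mem_iff_lt_rowLen.2 h
  have h2 := YoungDiagram.mem_iff_lt_rowLen.1 (hle h1)
  omega

lemma rl_gamma_strip {ρ γ : YoungDiagram} (hvert : ∀ s, γ.rowLen s ≤ ρ.rowLen s + 1) {s : ℕ}
    (h : VStrip ρ γ s) : rl γ s = rl ρ s + 1 := by
  have h1 := hvert s
  unfold VStrip at h
  unfold rl
  have : γ.rowLen s = ρ.rowLen s + 1 := by omega
  rw [this]
  push_cast
  ring

lemma rl_gamma_nostrip {ρ γ : YoungDiagram} (hle : ρ ≤ γ) {s : ℕ} (h : ¬ VStrip ρ γ s) :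
    rl γ s = rl ρ s := by
  have h1 := rowLen_mono hle s
  unfold VStrip at h
  unfold rl
  have : γ.rowLen s = ρ.rowLen s := by omega
  rw [this]

lemma delta_eq {k p : ℕ} (ρ γ : YoungDiagram) (hp : p = k + 1) (hle : ρ ≤ γ)
    (hvert : ∀ s, γ.rowLen s ≤ ρ.rowLen s + 1)
    (N N₂ : ℕ) (hNρ : ρ.colLen 0 ≤ N) (hNγ : γ.colLen 0 ≤ N)
    (hN₂ρ : ∀ s < N, (ρ.rowLen 0 : ℤ) + s + p ≤ N₂)
    (hN₂γ : ∀ s < N, (γ.rowLen 0 : ℤ) + s + p ≤ N₂) (hk : 1 ≤ k) :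
    (pSize k γ : ℤ) - pSize k ρ = ((PP1 ρ γ p N N₂).card : ℤ) - (PP3 ρ γ p N N₂).card := by
  have hpρ := pSize_formula p hp ρ N N₂ hNρ hN₂ρ
  have hpγ := pSize_formula p hp γ N N₂ hNγ hN₂γ
  have hdiff : (pSize k γ : ℤ) - pSize k ρ
      = ∑ s ∈ Finset.range N, ∑ s' ∈ Finset.range N₂,
        ((if rl ρ s - p < rl ρ s' ∧ rl ρ s' < rl ρ s then (1:ℤ) else 0)
          - (if rl γ s - p < rl γ s' ∧ rl γ s' < rl γ s then (1:ℤ) else 0)) := by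
    rw [hpρ, hpγ, ← Finset.sum_sub_distrib]
    congr 1
    ext s
    rw [Finset.sum_sub_distrib]
    have e1 : ∀ (μ : YoungDiagram),
        (((Finset.range N₂).filter
          (fun s' => rl μ s - p < rl μ s' ∧ rl μ s' < rl μ s)).card : ℤ)
        = ∑ s' ∈ Finset.range N₂,
            (if rl μ s - p < rl μ s' ∧ rl μ s' < rl μ s then (1:ℤ) else 0) := by
      intro μ
      rw [Finset.card_filter]
      push_cast
      rfl
    rw [e1 ρ, e1 γ]
    ring
  rw [hdiff]
  have hpt : ∀ s ∈ Finset.range N, ∀ s' ∈ Finset.range N₂,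
      ((if rl ρ s - p < rl ρ s' ∧ rl ρ s' < rl ρ s then (1:ℤ) else 0)
        - (if rl γ s - p < rl γ s' ∧ rl γ s' < rl γ s then (1:ℤ) else 0))
      = (if VStrip ρ γ s ∧ ¬ VStrip ρ γ s' ∧ rl ρ s - rl ρ s' = (p:ℤ) - 1 then (1:ℤ) else 0)
        - (if ¬ VStrip ρ γ s ∧ VStrip ρ γ s' ∧ rl ρ s - rl ρ s' = (p:ℤ) then (1:ℤ) else 0) := by
    intro s _ s' _
    have hpge : (2:ℤ) ≤ p := by exact_mod_cast (show 2 ≤ p by omega)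
    by_cases h1 : VStrip ρ γ s <;> by_cases h2 : VStrip ρ γ s'
    · rw [rl_gamma_strip hvert h1, rl_gamma_strip hvert h2]
      simp only [h1, h2, not_true_eq_false, true_and, false_and, and_false, if_false,
        and_true]
      split_ifs <;> omega
    · rw [rl_gamma_strip hvert h1, rl_gamma_nostrip hle h2]
      have hne : rl ρ s ≠ rl ρ s' := by
        intro he
        exact h2 (rl_inj ρ he ▸ h1)
      simp only [h1, h2, not_true_eq_false, not_false_eq_true, true_and, false_and,
        and_false, if_false, and_true, sub_zero]
      split_ifs <;> omega
    · rw [rl_gamma_nostrip hle h1, rl_gamma_strip hvert h2]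
      have hne : rl ρ s ≠ rl ρ s' + 1 := by
        intro he
        have hee : rl γ s = rl γ s' := by
          rw [rl_gamma_nostrip hle h1, rl_gamma_strip hvert h2, he]
        exact h1 (rl_inj γ hee ▸ h2)
      simp only [h1, h2, not_true_eq_false, not_false_eq_true, true_and, false_and,
        and_false, if_false, and_true, zero_sub]
      split_ifs <;> omega
    · rw [rl_gamma_nostrip hle h1, rl_gamma_nostrip hle h2]
      simp only [h1, h2, not_true_eq_false, not_false_eq_true, true_and, false_and,
        and_false, if_false, and_true]
      split_ifs <;> omega
  rw [Finset.sum_congr rfl (fun s hs => Finset.sum_congr rfl (fun s' hs' => hpt s hs s' hs'))]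
  rw [← Finset.sum_product']
  rw [Finset.sum_sub_distrib]
  unfold PP1 PP3
  simp only [Finset.card_filter]
  push_cast
  rfl

end Delta

/-! ## Structure lemmas for vertical pairs -/

section VertStruct
variable {k p : ℕ} {ρ γ : YoungDiagram}

lemma diff_cell (hvert : ∀ s, γ.rowLen s ≤ ρ.rowLen s + 1) {a b : ℕ}
    (h : (a, b) ∈ γ.cells \ ρ.cells) : VStrip ρ γ a ∧ b = ρ.rowLen a := by
  rw [Finset.mem_sdiff] at h
  obtain ⟨h1, h2⟩ := h
  have h1' : b < γ.rowLen a := YoungDiagram.mem_iff_lt_rowLen.1 ((YoungDiagram.mem_cells _).1 h1)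
  have h2' : ρ.rowLen a ≤ b := by
    by_contra hc
    exact h2 ((YoungDiagram.mem_cells _).2 (YoungDiagram.mem_iff_lt_rowLen.2 (by omega)))
  have := hvert a
  constructor
  · unfold VStrip; omega
  · omega

lemma strip_cell_mem (hle : ρ ≤ γ) {s : ℕ} (h : VStrip ρ γ s) :
    (s, ρ.rowLen s) ∈ γ.cells \ ρ.cells := by
  rw [Finset.mem_sdiff]
  constructor
  · exact (YoungDiagram.mem_cells _).2 (YoungDiagram.mem_iff_lt_rowLen.2 h)
  · intro hc
    have := YoungDiagram.mem_iff_lt_rowLen.1 ((YoungDiagram.mem_cells _).1 hc)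
    omega

lemma strip_res_mem (hle : ρ ≤ γ) {s : ℕ} (h : VStrip ρ γ s) :
    ((rl ρ s : ℤ) : ZMod (k+1)) ∈ resSet k ρ γ := by
  refine Finset.mem_image.2 ⟨(s, ρ.rowLen s), strip_cell_mem hle h, ?_⟩
  unfold residue rl
  push_cast
  ring

lemma res_has_strip_row (hvert : ∀ s, γ.rowLen s ≤ ρ.rowLen s + 1) {i : ZMod (k+1)}
    (h : i ∈ resSet k ρ γ) : ∃ s, VStrip ρ γ s ∧ ((rl ρ s : ℤ) : ZMod (k+1)) = i := by
  obtain ⟨⟨a, b⟩, hab, hres⟩ := Finset.mem_image.1 h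
  obtain ⟨h1, h2⟩ := diff_cell hvert hab
  refine ⟨a, h1, ?_⟩
  rw [← hres]
  unfold residue rl
  subst h2
  push_cast
  ring

lemma strip_lt (N : ℕ) (hNγ : γ.colLen 0 ≤ N) {s : ℕ} (h : VStrip ρ γ s) : s < N := by
  have h1 : 0 < γ.rowLen s := by unfold VStrip at h; omega
  have h2 : (s, 0) ∈ γ := YoungDiagram.mem_iff_lt_rowLen.2 h1
  have := YoungDiagram.mem_iff_lt_colLen.1 h2
  omega

lemma bead_row_bound (μ : YoungDiagram) {x : ℤ} {s : ℕ} (h : rl μ s = x) {M : ℤ}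
    (hx : M ≤ x) : (s : ℤ) ≤ (μ.rowLen 0 : ℤ) - M := by
  have h1 := rl_le_rowLen_zero μ s
  have h2 := rl_ge_neg μ s
  unfold rl at h
  have h3 : (0:ℤ) ≤ (μ.rowLen s : ℤ) := Int.ofNat_nonneg _
  have h4 : (μ.rowLen s : ℤ) ≤ μ.rowLen 0 := by
    exact_mod_cast μ.rowLen_anti 0 s (Nat.zero_le s)
  omega

end VertStruct


/-! ## Corner-removal pairs: (B)-side lemmas -/

section BSide
variable {k p : ℕ} {ρ γ : YoungDiagram}

lemma PP3_empty_of_corners (hp : p = k + 1) (hle : ρ ≤ γ)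
    (hvert : ∀ s, γ.rowLen s ≤ ρ.rowLen s + 1) (hγ : IsCore p γ)
    (hcorner : ∀ s, VStrip ρ γ s → γ.rowLen (s+1) ≤ ρ.rowLen s)
    (N N₂ : ℕ) : PP3 ρ γ p N N₂ = ∅ := by
  have hgap : ∀ s, VStrip ρ γ s → ¬ IsBead γ (rl ρ s) := by
    rintro s hs ⟨t, ht⟩
    have h1 : rl γ s = rl ρ s + 1 := rl_gamma_strip hvert hs
    have h2 : rl γ (s+1) ≤ rl ρ s - 1 := by
      have h0 := hcorner s hs
      unfold rl at *
      have : (γ.rowLen (s+1) : ℤ) ≤ ρ.rowLen s := by exact_mod_cast h0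
      push_cast
      omega
    rcases le_or_gt t s with h3 | h3
    · rcases lt_or_eq_of_le h3 with h4 | h4
      · have := rl_strict_anti γ h4
        omega
      · subst h4; omega
    · have h4 : s + 1 ≤ t := h3
      rcases lt_or_eq_of_le h4 with h5 | h5
      · have := rl_strict_anti γ h5
        omega
      · rw [← h5] at ht; omega
  ext q
  simp only [Finset.notMem_empty, iff_false]
  intro hq
  unfold PP3 at hq
  rw [Finset.mem_filter] at hq
  obtain ⟨_, hq1, hq2, hq3⟩ := hq
  have h1 : rl γ q.1 = rl ρ q.2 + p := by
    rw [rl_gamma_nostrip hle hq1]; omega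
  have h2 : IsBead γ (rl ρ q.2 + p) := ⟨q.1, h1⟩
  have h3 : IsBead γ (rl ρ q.2) := by
    have := core_bead_closed (by omega) hγ h2
    simpa using this
  exact hgap q.2 hq2 h3

lemma res_le_PP1_of_corners (hp : p = k + 1) (hle : ρ ≤ γ)
    (hvert : ∀ s, γ.rowLen s ≤ ρ.rowLen s + 1) (hγ : IsCore p γ)
    (N N₂ : ℕ) (hNγ : γ.colLen 0 ≤ N)
    (hNN₂ : (ρ.rowLen 0 : ℤ) + N + p ≤ N₂) :
    (resSet k ρ γ).card ≤ (PP1 ρ γ p N N₂).card := by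
  classical
  have hrow : ∀ i ∈ resSet k ρ γ, ∃ s, (VStrip ρ γ s ∧ ((rl ρ s : ℤ) : ZMod (k+1)) = i) ∧
      (∀ s', VStrip ρ γ s' → ((rl ρ s' : ℤ) : ZMod (k+1)) = i → s' ≤ s) := by
    intro i hi
    obtain ⟨s, hs⟩ := res_has_strip_row hvert hi
    have hbdd : ∀ s', VStrip ρ γ s' → s' < N := fun s' h => strip_lt N hNγ h
    set F : Finset ℕ := (Finset.range N).filter
      (fun s' => VStrip ρ γ s' ∧ ((rl ρ s' : ℤ) : ZMod (k+1)) = i) with hF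
    have hne : F.Nonempty := ⟨s, by
      rw [hF, Finset.mem_filter, Finset.mem_range]
      exact ⟨hbdd s hs.1, hs⟩⟩
    refine ⟨F.max' hne, ?_, ?_⟩
    · exact (Finset.mem_filter.1 (F.max'_mem hne)).2
    · intro s' h1 h2
      refine Finset.le_max' F s' ?_
      rw [hF, Finset.mem_filter, Finset.mem_range]
      exact ⟨hbdd s' h1, h1, h2⟩
  choose jf hjf using hrow
  have htarget : ∀ i (hi : i ∈ resSet k ρ γ), ∃ b : ℕ,
      ¬ VStrip ρ γ b ∧ rl ρ b = rl ρ (jf i hi) + 1 - p := by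
    intro i hi
    obtain ⟨⟨hstrip, hres⟩, hmax⟩ := hjf i hi
    set x := rl ρ (jf i hi) with hx
    have h1 : IsBead γ (x + 1) := ⟨jf i hi, rl_gamma_strip hvert hstrip⟩
    have h2 : IsBead γ (x + 1 - p) := core_bead_closed (by omega) hγ h1
    obtain ⟨b, hb⟩ := h2
    by_cases h3 : VStrip ρ γ b
    · exfalso
      have h4 : rl ρ b = x - p := by
        have := rl_gamma_strip hvert h3
        omega
      have hpz : ((p : ℤ) : ZMod (k+1)) = 0 := by
        subst hp
        exact_mod_cast ZMod.natCast_self (k+1)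
      have h5 : ((rl ρ b : ℤ) : ZMod (k+1)) = i := by
        rw [h4, ← hres, hx, Int.cast_sub, hpz, sub_zero]
      have h6 := hmax b h3 h5
      have h7 : rl ρ b < x := by rw [h4]; omega
      have h8 : jf i hi < b := by
        by_contra hc
        push_neg at hc
        rcases lt_or_eq_of_le hc with h9 | h9
        · have := rl_strict_anti ρ h9; omega
        · rw [h9] at h7; omega
      omega
    · refine ⟨b, h3, ?_⟩
      rw [← rl_gamma_nostrip hle h3]
      exact hb
  choose bf hbf using htarget
  refine Finset.card_le_card_of_injOn
    (fun i => if hi : i ∈ resSet k ρ γ then (jf i hi, bf i hi) else (0,0)) ?_ ?_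
  · intro i hi
    simp only [Finset.mem_coe.1 hi, dif_pos]
    obtain ⟨⟨hstrip, hres⟩, _⟩ := hjf i hi
    obtain ⟨hnb, hbead⟩ := hbf i hi
    unfold PP1
    rw [Finset.mem_coe, Finset.mem_filter, Finset.mem_product, Finset.mem_range, Finset.mem_range]
    refine ⟨⟨strip_lt N hNγ hstrip, ?_⟩, hstrip, hnb, by rw [hbead]; ring⟩
    have h1 : rl ρ (jf i hi) + 1 - p ≥ -(N:ℤ) + 1 - p := by
      have hg := rl_ge_neg ρ (jf i hi)
      have hlt := strip_lt N hNγ hstrip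
      have : ((jf i hi : ℕ) : ℤ) < N := by exact_mod_cast hlt
      omega
    have h2 := bead_row_bound ρ hbead (M := -(N:ℤ) + 1 - p) h1
    have : ((bf i hi : ℕ) : ℤ) < N₂ := by omega
    exact_mod_cast this
  · intro i hi i' hi' he
    simp only [Finset.mem_coe] at hi hi'
    simp only [hi, hi', dif_pos] at he
    have h1 : jf i hi = jf i' hi' := (Prod.ext_iff.1 he).1
    obtain ⟨⟨_, hres⟩, _⟩ := hjf i hi
    obtain ⟨⟨_, hres'⟩, _⟩ := hjf i' hi'
    rw [← hres, ← hres', h1]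

end BSide


/-! ## Ladders and the (A)-side injection -/

section ASide
variable {k p : ℕ} {ρ γ : YoungDiagram}

def InT (ρ γ : YoungDiagram) (x : ℤ) : Prop := ∃ j, VStrip ρ γ j ∧ rl ρ j = x

noncomputable def ladLen (ρ γ : YoungDiagram) (p : ℕ) (x : ℤ) : ℕ :=
  Nat.findGreatest (fun l => ∀ l' ≤ l, InT ρ γ (x + l' * p)) ((rl ρ 0 + 1 - x).toNat)

noncomputable def topP (ρ γ : YoungDiagram) (p : ℕ) (x : ℤ) : ℤ :=
  x + ladLen ρ γ p x * p

lemma InT_le_rl0 {x : ℤ} (h : InT ρ γ x) : x ≤ rl ρ 0 := by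
  obtain ⟨j, _, hj⟩ := h
  rw [← hj]
  exact le_trans (rl_le_rowLen_zero ρ j) (by unfold rl; simp)

lemma lad_good (hp : 1 ≤ p) {x : ℤ} (hx : InT ρ γ x) :
    ∀ l ≤ ladLen ρ γ p x, InT ρ γ (x + l * p) := by
  exact Nat.findGreatest_spec (P := fun l => ∀ l' ≤ l, InT ρ γ (x + l' * p)) (Nat.zero_le _)
    (by intro l' hl'
        have hl0 : l' = 0 := by omega
        subst hl0
        simpa using hx)

lemma lad_top_not (hp : 1 ≤ p) {x : ℤ} (hx : InT ρ γ x) :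
    ¬ InT ρ γ (x + (ladLen ρ γ p x + 1) * p) := by
  classical
  set P : ℕ → Prop := fun l => ∀ l' ≤ l, InT ρ γ (x + l' * p) with hPdef
  set B : ℕ := (rl ρ 0 + 1 - x).toNat with hB
  have hdef : ladLen ρ γ p x = Nat.findGreatest P B := rfl
  have hxle : x ≤ rl ρ 0 := InT_le_rl0 hx
  have hBval : (rl ρ 0 + 1 - x : ℤ) ≤ B := Int.self_le_toNat _
  have hgood : P (Nat.findGreatest P B) := by
    rw [← hdef]
    exact lad_good hp hx
  have hnotB : ¬ P B := by
    intro hP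
    have h1 := InT_le_rl0 (hP B le_rfl)
    have hp' : (1:ℤ) ≤ p := by exact_mod_cast hp
    have hB0 : (0:ℤ) ≤ (B:ℤ) := Int.ofNat_nonneg _
    nlinarith [hB0, hp', mul_le_mul_of_nonneg_left hp' hB0]
  have hlt : Nat.findGreatest P B < B := by
    rcases lt_or_eq_of_le (Nat.findGreatest_le (P := P) B) with h | h
    · exact h
    · exact absurd (h ▸ hgood) hnotB
  have hnot : ¬ P (Nat.findGreatest P B + 1) :=
    Nat.findGreatest_is_greatest
      (show Nat.findGreatest P B < Nat.findGreatest P B + 1 by omega)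
      (show Nat.findGreatest P B + 1 ≤ B by omega)
  intro hcon
  apply hnot
  intro l' hl'
  rcases Nat.lt_or_ge l' (Nat.findGreatest P B + 1) with h | h
  · exact hgood l' (by omega)
  · have he : l' = Nat.findGreatest P B + 1 := by omega
    rw [he, ← hdef]
    exact hcon

lemma no_collision (hle : ρ ≤ γ) (hvert : ∀ s, γ.rowLen s ≤ ρ.rowLen s + 1)
    {x : ℤ} {b : ℕ} (hb : ¬ VStrip ρ γ b) (hbead : rl ρ b = x + 1 - p) :
    ¬ InT ρ γ (x - p) := by
  rintro ⟨j, hj, hjx⟩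
  have h1 : rl γ j = x + 1 - p := by rw [rl_gamma_strip hvert hj, hjx]; ring
  have h2 : rl γ b = x + 1 - p := by rw [rl_gamma_nostrip hle hb, hbead]
  have := rl_inj γ (h1.trans h2.symm)
  subst this
  exact hb hj

lemma PP1_mem {N N₂ : ℕ} {q : ℕ × ℕ} (h : q ∈ PP1 ρ γ p N N₂) :
    VStrip ρ γ q.1 ∧ ¬ VStrip ρ γ q.2 ∧ rl ρ q.1 - rl ρ q.2 = (p:ℤ) - 1 := by
  unfold PP1 at h
  exact (Finset.mem_filter.1 h).2

lemma cast_eq_imp (hp : p = k + 1) {x y : ℤ}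
    (h : ((x : ZMod (k+1)) = (y : ZMod (k+1)))) (hxy : x < y) :
    ∃ t : ℕ, 1 ≤ t ∧ y = x + t * p := by
  have hdvd : ((k+1 : ℕ) : ℤ) ∣ y - x := by
    rwa [ZMod.intCast_eq_intCast_iff, Int.modEq_iff_dvd] at h
  obtain ⟨t, ht⟩ := hdvd
  have hpos : 0 < t := by
    by_contra hc
    push_neg at hc
    have h2 : ((k+1:ℕ):ℤ) * t ≤ 0 := by
      apply mul_nonpos_of_nonneg_of_nonpos
      · positivity
      · exact hc
    omega
  refine ⟨t.toNat, by omega, ?_⟩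
  have h1 : (t.toNat : ℤ) = t := Int.toNat_of_nonneg (by omega)
  rw [h1, hp]
  push_cast
  push_cast at ht
  linear_combination ht

lemma PP1_le (hp : p = k + 1) (hk : 1 ≤ k) (hle : ρ ≤ γ)
    (hvert : ∀ s, γ.rowLen s ≤ ρ.rowLen s + 1) (hcore : IsCore p ρ)
    (N N₂ : ℕ) (hNγ : γ.colLen 0 ≤ N) (hNleN₂ : N ≤ N₂) :
    (PP1 ρ γ p N N₂).card ≤ (PP3 ρ γ p N N₂).card + (resSet k ρ γ).card := by
  classical
  have hp1 : 1 ≤ p := by omega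
  set P1 := PP1 ρ γ p N N₂ with hP1
  set Q : ℕ × ℕ → Prop := fun q => IsBead ρ (topP ρ γ p (rl ρ q.1) + p) with hQ
  have hsplit := Finset.card_filter_add_card_filter_not (s := P1) (p := Q)
  have hfacts : ∀ q ∈ P1, InT ρ γ (rl ρ q.1) ∧ InT ρ γ (topP ρ γ p (rl ρ q.1))
      ∧ ¬ InT ρ γ (topP ρ γ p (rl ρ q.1) + p) ∧ ¬ InT ρ γ (rl ρ q.1 - p) := by
    intro q hq
    obtain ⟨h1, h2, h3⟩ := PP1_mem hq
    have hInT : InT ρ γ (rl ρ q.1) := ⟨q.1, h1, rfl⟩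
    refine ⟨hInT, ?_, ?_, ?_⟩
    · have := lad_good hp1 hInT (ladLen ρ γ p (rl ρ q.1)) le_rfl
      unfold topP
      exact this
    · have hh := lad_top_not hp1 hInT
      unfold topP
      intro hcon
      apply hh
      have he : rl ρ q.1 + (ladLen ρ γ p (rl ρ q.1) + 1) * p
          = rl ρ q.1 + (ladLen ρ γ p (rl ρ q.1)) * p + p := by push_cast; ring
      rw [he]
      exact hcon
    · exact no_collision hle hvert h2 (by omega)
  have hA : (P1.filter Q).card ≤ (PP3 ρ γ p N N₂).card := by
    have hex : ∀ q ∈ P1.filter Q, ∃ ab : ℕ × ℕ,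
        (¬ VStrip ρ γ ab.1 ∧ rl ρ ab.1 = topP ρ γ p (rl ρ q.1) + p)
        ∧ (VStrip ρ γ ab.2 ∧ rl ρ ab.2 = topP ρ γ p (rl ρ q.1)) := by
      intro q hq
      rw [Finset.mem_filter] at hq
      obtain ⟨hq1, hq2⟩ := hq
      obtain ⟨hInT, htop, htopnot, _⟩ := hfacts q hq1
      obtain ⟨a, ha⟩ := hq2
      obtain ⟨j, hj1, hj2⟩ := htop
      refine ⟨(a, j), ⟨?_, ha⟩, hj1, hj2⟩
      intro hcon
      exact htopnot ⟨a, hcon, ha⟩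
    choose F hF using hex
    refine Finset.card_le_card_of_injOn
      (fun q => if h : q ∈ P1.filter Q then F q h else (0,0)) ?_ ?_
    · intro q hq
      simp only [Finset.mem_coe.1 hq, dif_pos]
      obtain ⟨⟨ha1, ha2⟩, hb1, hb2⟩ := hF q hq
      have hq1 : q ∈ P1 := (Finset.mem_filter.1 hq).1
      obtain ⟨hs1, hs2, hs3⟩ := PP1_mem hq1
      unfold PP3
      rw [Finset.mem_coe, Finset.mem_filter, Finset.mem_product, Finset.mem_range, Finset.mem_range]
      have hjN : (F q hq).2 < N := strip_lt N hNγ hb1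
      have haj : (F q hq).1 < (F q hq).2 := by
        by_contra hc
        push_neg at hc
        rcases lt_or_eq_of_le hc with h | h
        · have := rl_strict_anti ρ h
          omega
        · rw [← h] at ha2
          omega
      exact ⟨⟨by omega, by omega⟩, ha1, hb1, by omega⟩
    · intro q hq q' hq' he
      simp only [Finset.mem_coe] at hq hq'
      simp only [hq, hq', dif_pos] at he
      obtain ⟨⟨_, ha2⟩, hb1, hb2⟩ := hF q hq
      obtain ⟨⟨_, ha2'⟩, hb1', hb2'⟩ := hF q' hq'
      have htopeq : topP ρ γ p (rl ρ q.1) = topP ρ γ p (rl ρ q'.1) := by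
        have h2 : (F q hq).2 = (F q' hq').2 := (Prod.ext_iff.1 he).2
        rw [← hb2, ← hb2', h2]
      have hq1 : q ∈ P1 := (Finset.mem_filter.1 hq).1
      have hq1' : q' ∈ P1 := (Finset.mem_filter.1 hq').1
      have key : ∀ (a b : ℕ × ℕ), a ∈ P1 → b ∈ P1 →
          topP ρ γ p (rl ρ a.1) = topP ρ γ p (rl ρ b.1) →
          ladLen ρ γ p (rl ρ b.1) < ladLen ρ γ p (rl ρ a.1) → False := by
        intro a b haP hbP htop hlad
        obtain ⟨hInTa, _, _, _⟩ := hfacts a haP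
        obtain ⟨_, _, _, hcolb⟩ := hfacts b hbP
        apply hcolb
        set la := ladLen ρ γ p (rl ρ a.1)
        set lb := ladLen ρ γ p (rl ρ b.1)
        have he2 : rl ρ b.1 - p = rl ρ a.1 + ((la - lb - 1 : ℕ) : ℤ) * p := by
          unfold topP at htop
          have hcast : ((la - lb - 1 : ℕ) : ℤ) = (la : ℤ) - lb - 1 := by
            push_cast [Nat.cast_sub (by omega : lb + 1 ≤ la)]
            omega
          rw [hcast]
          push_cast at htop ⊢
          linear_combination -htop
        rw [he2]
        exact lad_good hp1 hInTa _ (by omega)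
      have hxx : rl ρ q.1 = rl ρ q'.1 := by
        rcases Nat.lt_trichotomy (ladLen ρ γ p (rl ρ q.1)) (ladLen ρ γ p (rl ρ q'.1))
          with h | h | h
        · exact (key q' q hq1' hq1 htopeq.symm h).elim
        · have h2 := htopeq
          unfold topP at h2
          rw [h] at h2
          omega
        · exact (key q q' hq1 hq1' htopeq h).elim
      have hq11 : q.1 = q'.1 := rl_inj ρ hxx
      have hq22 : q.2 = q'.2 := by
        obtain ⟨_, _, h3⟩ := PP1_mem hq1
        obtain ⟨_, _, h3'⟩ := PP1_mem hq1'
        refine rl_inj ρ ?_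
        rw [hq11] at h3
        omega
      exact Prod.ext hq11 hq22
  have hB : (P1.filter (fun q => ¬ Q q)).card ≤ (resSet k ρ γ).card := by
    have haux : ∀ q ∈ P1.filter (fun q => ¬ Q q), ∀ q' ∈ P1.filter (fun q => ¬ Q q),
        ((rl ρ q.1 : ℤ) : ZMod (k+1)) = ((rl ρ q'.1 : ℤ) : ZMod (k+1)) →
        rl ρ q.1 < rl ρ q'.1 → False := by
      intro q hq q' hq' hcast hlt
      rw [Finset.mem_filter] at hq hq'
      obtain ⟨hq1, hqQ⟩ := hq
      obtain ⟨hq1', hqQ'⟩ := hq'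
      obtain ⟨hInT, _, _, _⟩ := hfacts q hq1
      obtain ⟨_, _, _, hcol'⟩ := hfacts q' hq1'
      obtain ⟨t, ht1, ht2⟩ := cast_eq_imp hp hcast hlt
      by_cases hcase : rl ρ q'.1 ≤ topP ρ γ p (rl ρ q.1)
      · apply hcol'
        have htle : t ≤ ladLen ρ γ p (rl ρ q.1) := by
          unfold topP at hcase
          have hp' : (1:ℤ) ≤ p := by exact_mod_cast hp1
          by_contra hc
          push_neg at hc
          have : (ladLen ρ γ p (rl ρ q.1) : ℤ) + 1 ≤ t := by exact_mod_cast hc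
          nlinarith [ht2, hcase]
        have he2 : rl ρ q'.1 - p = rl ρ q.1 + ((t - 1 : ℕ) : ℤ) * p := by
          have hc1 : ((t-1:ℕ):ℤ) = (t:ℤ) - 1 := by push_cast [Nat.cast_sub ht1]; omega
          rw [hc1, ht2]
          ring
        rw [he2]
        exact lad_good hp1 hInT _ (by omega)
      · push_neg at hcase
        apply hqQ
        have hlad : ladLen ρ γ p (rl ρ q.1) < t := by
          unfold topP at hcase
          have hp' : (1:ℤ) ≤ p := by exact_mod_cast hp1
          by_contra hc
          push_neg at hc
          have : (t:ℤ) ≤ ladLen ρ γ p (rl ρ q.1) := by exact_mod_cast hc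
          nlinarith [ht2, hcase]
        have hbead : IsBead ρ (rl ρ q'.1) := ⟨q'.1, rfl⟩
        have hray := core_bead_ray hp1 hcore hbead (t - 1 - ladLen ρ γ p (rl ρ q.1))
        have he2 : rl ρ q'.1 - ((t - 1 - ladLen ρ γ p (rl ρ q.1) : ℕ) : ℤ) * p
            = topP ρ γ p (rl ρ q.1) + p := by
          have h1 : ((t - 1 - ladLen ρ γ p (rl ρ q.1) : ℕ) : ℤ)
              = (t:ℤ) - 1 - ladLen ρ γ p (rl ρ q.1) := by
            push_cast [Nat.cast_sub (by omega : 1 + ladLen ρ γ p (rl ρ q.1) ≤ t)]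
            omega
          rw [h1, ht2]
          unfold topP
          ring
        rw [he2] at hray
        exact hray
    refine Finset.card_le_card_of_injOn (fun q => ((rl ρ q.1 : ℤ) : ZMod (k+1))) ?_ ?_
    · intro q hq
      rw [Finset.mem_coe, Finset.mem_filter] at hq
      obtain ⟨hs1, _, _⟩ := PP1_mem hq.1
      exact strip_res_mem hle hs1
    · intro q hq q' hq' he
      simp only [Finset.mem_coe] at hq hq'
      rcases lt_trichotomy (rl ρ q.1) (rl ρ q'.1) with h | h | h
      · exact (haux q hq q' hq' he h).elim
      · have hq11 : q.1 = q'.1 := rl_inj ρ h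
        have hq1 : q ∈ P1 := (Finset.mem_filter.1 hq).1
        have hq1' : q' ∈ P1 := (Finset.mem_filter.1 hq').1
        obtain ⟨_, _, h3⟩ := PP1_mem hq1
        obtain ⟨_, _, h3'⟩ := PP1_mem hq1'
        have hq22 : q.2 = q'.2 := by
          refine rl_inj ρ ?_
          rw [hq11] at h3
          omega
        exact Prod.ext hq11 hq22
      · exact (haux q' hq' q hq he.symm h).elim
  omega

end ASide


/-! ## Transpose lemmas and final wrappers -/

section TransposeLemmas

lemma hookLen_transpose (μ : YoungDiagram) (a b : ℕ) :
    hookLen μ.transpose a b = hookLen μ b a := by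
  unfold hookLen
  rw [YoungDiagram.rowLen_transpose, YoungDiagram.colLen_transpose]
  ring_nf

lemma isCore_transpose {p : ℕ} {μ : YoungDiagram} (h : IsCore p μ) : IsCore p μ.transpose := by
  intro c hc
  rw [hookLen_transpose]
  have hc' : c.swap ∈ μ := YoungDiagram.mem_transpose.1 (by cases c; exact hc)
  have := h c.swap hc'
  cases c
  exact this

lemma pSize_transpose (k : ℕ) (μ : YoungDiagram) : pSize k μ.transpose = pSize k μ := by
  unfold pSize
  refine Finset.card_bij (fun c _ => c.swap) ?_ ?_ ?_
  · rintro ⟨a, b⟩ hc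
    rw [Finset.mem_filter] at hc ⊢
    obtain ⟨h1, h2⟩ := hc
    rw [hookLen_transpose] at h2
    refine ⟨?_, h2⟩
    have := YoungDiagram.mem_transpose.1 ((YoungDiagram.mem_cells _).1 h1)
    exact (YoungDiagram.mem_cells _).2 this
  · rintro ⟨a, b⟩ _ ⟨a', b'⟩ _ he
    have := Prod.ext_iff.1 he
    simp only [Prod.swap_prod_mk, Prod.mk.injEq] at this
    simp [Prod.ext_iff, this.1, this.2]
  · rintro ⟨a, b⟩ hc
    refine ⟨(b, a), ?_, rfl⟩
    rw [Finset.mem_filter] at hc ⊢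
    obtain ⟨h1, h2⟩ := hc
    constructor
    · exact (YoungDiagram.mem_cells _).2
        (YoungDiagram.mem_transpose.2 ((YoungDiagram.mem_cells _).1 h1))
    · rw [hookLen_transpose]
      exact h2

lemma cells_sdiff_transpose (ρ γ : YoungDiagram) :
    γ.transpose.cells \ ρ.transpose.cells = (γ.cells \ ρ.cells).image Prod.swap := by
  ext c
  simp only [Finset.mem_sdiff, Finset.mem_image, YoungDiagram.mem_cells]
  constructor
  · rintro ⟨h1, h2⟩
    refine ⟨c.swap, ⟨?_, ?_⟩, by simp⟩
    · exact YoungDiagram.mem_transpose.1 (by cases c; exact h1)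
    · intro hc
      apply h2
      cases c
      exact (YoungDiagram.mem_cells _).2 (YoungDiagram.mem_transpose.2 (by simpa using hc))
  · rintro ⟨d, ⟨h1, h2⟩, he⟩
    subst he
    constructor
    · exact (YoungDiagram.mem_cells _).2 (YoungDiagram.mem_transpose.2 (by simpa using h1))
    · intro hc
      apply h2
      have := YoungDiagram.mem_transpose.1 ((YoungDiagram.mem_cells _).1 hc)
      simpa using this

lemma resSet_transpose_card (k : ℕ) (ρ γ : YoungDiagram) :
    (resSet k ρ.transpose γ.transpose).card = (resSet k ρ γ).card := by
  unfold resSet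
  rw [cells_sdiff_transpose, Finset.image_image]
  have he : residue k ∘ Prod.swap = (fun z => -z) ∘ residue k := by
    funext c
    simp only [residue, Function.comp, Prod.fst_swap, Prod.snd_swap]
    ring
  rw [he, ← Finset.image_image]
  exact Finset.card_image_of_injective _ neg_injective

lemma vert_of_horiz {ρ γ : YoungDiagram} (h : IsHorizontalStrip ρ γ) :
    ∀ s, γ.transpose.rowLen s ≤ ρ.transpose.rowLen s + 1 := by
  intro s
  rw [YoungDiagram.rowLen_transpose, YoungDiagram.rowLen_transpose]
  by_contra hc
  push_neg at hc
  have h1 : (ρ.colLen s, s) ∈ γ := YoungDiagram.mem_iff_lt_colLen.2 (by omega)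
  have h2 : (ρ.colLen s + 1, s) ∈ γ := YoungDiagram.mem_iff_lt_colLen.2 (by omega)
  have h3 : (ρ.colLen s, s) ∉ ρ := fun hm => by
    have := YoungDiagram.mem_iff_lt_colLen.1 hm; omega
  have h4 : (ρ.colLen s + 1, s) ∉ ρ := fun hm => by
    have := YoungDiagram.mem_iff_lt_colLen.1 hm; omega
  have := h.2 _ _ h1 h3 h2 h4 rfl
  simp at this

lemma removable_transpose {β : YoungDiagram} {c : ℕ × ℕ} (h : Removable β c) :
    Removable β.transpose c.swap := by
  obtain ⟨h1, h2, h3⟩ := h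
  refine ⟨YoungDiagram.mem_transpose.2 (by cases c; simpa using h1), ?_, ?_⟩
  · intro hc
    exact h3 (by
      have := YoungDiagram.mem_transpose.1 hc
      cases c
      simpa using this)
  · intro hc
    exact h2 (by
      have := YoungDiagram.mem_transpose.1 hc
      cases c
      simpa using this)

end TransposeLemmas

/-! ## Final wrappers of (A) and (B) -/

section Finals
variable {k : ℕ} {ρ γ : YoungDiagram}

lemma A_final (hk : 1 ≤ k) (hcore : IsCore (k+1) ρ) (hle : ρ ≤ γ)
    (hvert : ∀ s, γ.rowLen s ≤ ρ.rowLen s + 1) :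
    pSize k γ ≤ pSize k ρ + (resSet k ρ γ).card := by
  set p := k + 1 with hp
  set N := ρ.colLen 0 + γ.colLen 0 + 1 with hN
  set N₂ := ρ.rowLen 0 + γ.rowLen 0 + N + p + 1 with hN₂
  have hNρ : ρ.colLen 0 ≤ N := by omega
  have hNγ : γ.colLen 0 ≤ N := by omega
  have hN₂ρ : ∀ s < N, (ρ.rowLen 0 : ℤ) + s + p ≤ N₂ := by
    intro s hs
    have : (s:ℤ) < N := by exact_mod_cast hs
    have h2 : ((N₂:ℕ):ℤ) = (ρ.rowLen 0 : ℤ) + γ.rowLen 0 + N + p + 1 := by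
      rw [hN₂]; push_cast; ring
    have h3 : (0:ℤ) ≤ (γ.rowLen 0 : ℤ) := Int.ofNat_nonneg _
    omega
  have hN₂γ : ∀ s < N, (γ.rowLen 0 : ℤ) + s + p ≤ N₂ := by
    intro s hs
    have : (s:ℤ) < N := by exact_mod_cast hs
    have h2 : ((N₂:ℕ):ℤ) = (ρ.rowLen 0 : ℤ) + γ.rowLen 0 + N + p + 1 := by
      rw [hN₂]; push_cast; ring
    have h3 : (0:ℤ) ≤ (ρ.rowLen 0 : ℤ) := Int.ofNat_nonneg _
    omega
  have hdelta := delta_eq ρ γ rfl hle hvert N N₂ hNρ hNγ hN₂ρ hN₂γ hk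
  have hineq := PP1_le rfl hk hle hvert hcore N N₂ hNγ (by omega)
  have h1 : (pSize k γ : ℤ) ≤ (pSize k ρ : ℤ) + (resSet k ρ γ).card := by
    have h2 : ((PP1 ρ γ p N N₂).card : ℤ)
        ≤ ((PP3 ρ γ p N N₂).card : ℤ) + (resSet k ρ γ).card := by exact_mod_cast hineq
    omega
  exact_mod_cast h1

lemma B_final (hk : 1 ≤ k) (hcore : IsCore (k+1) γ) (hle : ρ ≤ γ)
    (hvert : ∀ s, γ.rowLen s ≤ ρ.rowLen s + 1)
    (hcorner : ∀ s, VStrip ρ γ s → γ.rowLen (s+1) ≤ ρ.rowLen s) :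
    pSize k ρ + (resSet k ρ γ).card ≤ pSize k γ := by
  set p := k + 1 with hp
  set N := ρ.colLen 0 + γ.colLen 0 + 1 with hN
  set N₂ := ρ.rowLen 0 + γ.rowLen 0 + N + p + 1 with hN₂
  have hNρ : ρ.colLen 0 ≤ N := by omega
  have hNγ : γ.colLen 0 ≤ N := by omega
  have hN₂ρ : ∀ s < N, (ρ.rowLen 0 : ℤ) + s + p ≤ N₂ := by
    intro s hs
    have : (s:ℤ) < N := by exact_mod_cast hs
    have h2 : ((N₂:ℕ):ℤ) = (ρ.rowLen 0 : ℤ) + γ.rowLen 0 + N + p + 1 := by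
      rw [hN₂]; push_cast; ring
    have h3 : (0:ℤ) ≤ (γ.rowLen 0 : ℤ) := Int.ofNat_nonneg _
    omega
  have hN₂γ : ∀ s < N, (γ.rowLen 0 : ℤ) + s + p ≤ N₂ := by
    intro s hs
    have : (s:ℤ) < N := by exact_mod_cast hs
    have h2 : ((N₂:ℕ):ℤ) = (ρ.rowLen 0 : ℤ) + γ.rowLen 0 + N + p + 1 := by
      rw [hN₂]; push_cast; ring
    have h3 : (0:ℤ) ≤ (ρ.rowLen 0 : ℤ) := Int.ofNat_nonneg _
    omega
  have hNN₂ : (ρ.rowLen 0 : ℤ) + N + p ≤ N₂ := by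
    have h2 : ((N₂:ℕ):ℤ) = (ρ.rowLen 0 : ℤ) + γ.rowLen 0 + N + p + 1 := by
      rw [hN₂]; push_cast; ring
    have h3 : (0:ℤ) ≤ (γ.rowLen 0 : ℤ) := Int.ofNat_nonneg _
    omega
  have hdelta := delta_eq ρ γ rfl hle hvert N N₂ hNρ hNγ hN₂ρ hN₂γ hk
  have hempty := PP3_empty_of_corners rfl hle hvert hcore hcorner N N₂
  have hres := res_le_PP1_of_corners rfl hle hvert hcore N N₂ hNγ hNN₂
  rw [hempty] at hdelta
  simp only [Finset.card_empty, Nat.cast_zero, sub_zero] at hdelta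
  have h1 : (pSize k ρ : ℤ) + (resSet k ρ γ).card ≤ pSize k γ := by
    have h2 : ((resSet k ρ γ).card : ℤ) ≤ (PP1 ρ γ p N N₂).card := by exact_mod_cast hres
    omega
  exact_mod_cast h1

end Finals


/-- For any affine set-valued `r`-strip `(γ/β, ρ)`, the residue sets
`Res(γ/β)` and `Res(β/ρ)` are disjoint; consequently the cells of `γ/ρ` occupy exactly `r`
distinct residues. -/
theorem resSet_disjoint_of_affineSVStrip
    (k : ℕ) (hk : 1 ≤ k) (r : ℕ) (ρ β γ : YoungDiagram)
    (h : IsAffineSVStrip k r ρ β γ) :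
    Disjoint (resSet k β γ) (resSet k ρ β) ∧ (resSet k ρ γ).card = r := by
  classical
  obtain ⟨hr, hρcore, hρβ, hstripργ, hmr, haff, hcorners, -⟩ := h
  obtain ⟨hrmk, hβcore, hγcore, hstripβγ, hpsize, hcardβγ⟩ := haff
  set m := (resSet k ρ β).card with hm
  -- Transposed diagrams
  set ρt := ρ.transpose with hρt
  set βt := β.transpose with hβt
  set γt := γ.transpose with hγt
  -- (A) applied to (ρᵀ, γᵀ)
  have hAA : pSize k γ ≤ pSize k ρ + (resSet k ρ γ).card := by
    have h1 : ρt ≤ γt := YoungDiagram.transpose_mono hstripργ.1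
    have h2 : ∀ s, γt.rowLen s ≤ ρt.rowLen s + 1 := vert_of_horiz hstripργ
    have h3 : IsCore (k+1) ρt := isCore_transpose hρcore
    have := A_final hk h3 h1 h2
    rwa [hρt, hγt, pSize_transpose, pSize_transpose, resSet_transpose_card] at this
  -- (B) applied to (ρᵀ, βᵀ)
  have hBB : pSize k ρ + m ≤ pSize k β := by
    have h1 : ρt ≤ βt := YoungDiagram.transpose_mono hρβ
    have h3 : IsCore (k+1) βt := isCore_transpose hβcore
    -- vertical condition
    have h2 : ∀ s, βt.rowLen s ≤ ρt.rowLen s + 1 := by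
      intro j
      rw [hρt, hβt, YoungDiagram.rowLen_transpose, YoungDiagram.rowLen_transpose]
      by_contra hc
      push_neg at hc
      have hc1 : (ρ.colLen j, j) ∈ β := YoungDiagram.mem_iff_lt_colLen.2 (by omega)
      have hc2 : (ρ.colLen j + 1, j) ∈ β := YoungDiagram.mem_iff_lt_colLen.2 (by omega)
      have hc3 : (ρ.colLen j, j) ∉ ρ := fun hmem => by
        have := YoungDiagram.mem_iff_lt_colLen.1 hmem; omega
      have hrem := hcorners _ hc1 hc3
      exact hrem.2.1 hc2
    -- removable corner condition
    have h4 : ∀ s, VStrip ρt βt s → βt.rowLen (s+1) ≤ ρt.rowLen s := by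
      intro s hs
      have hcell := strip_cell_mem h1 hs
      set c := ρt.rowLen s with hc
      have hswap : (c, s) ∈ β.cells \ ρ.cells := by
        rw [Finset.mem_sdiff] at hcell ⊢
        obtain ⟨hc1, hc2⟩ := hcell
        constructor
        · have := YoungDiagram.mem_transpose.1 ((YoungDiagram.mem_cells _).1 hc1)
          exact (YoungDiagram.mem_cells _).2 this
        · intro hcon
          apply hc2
          refine (YoungDiagram.mem_cells _).2 (YoungDiagram.mem_transpose.2 ?_)
          simpa using (YoungDiagram.mem_cells _).1 hcon
      rw [Finset.mem_sdiff] at hswap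
      have hrem : Removable β (c, s) :=
        hcorners _ ((YoungDiagram.mem_cells _).1 hswap.1)
          (fun hcon => hswap.2 ((YoungDiagram.mem_cells _).2 hcon))
      have hremT : Removable βt (s, c) := by
        have := removable_transpose hrem
        simpa using this
      have h5 : (s+1, c) ∉ βt := hremT.2.1
      by_contra hcon
      push_neg at hcon
      exact h5 (YoungDiagram.mem_iff_lt_rowLen.2 (by omega))
    have := B_final hk h3 h1 h2 h4
    rw [hρt, hβt, pSize_transpose, pSize_transpose, resSet_transpose_card] at this
    exact this
  -- union decomposition
  have hun : resSet k ρ γ = resSet k β γ ∪ resSet k ρ β := by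
    unfold resSet
    rw [← Finset.image_union]
    congr 1
    ext c
    simp only [Finset.mem_sdiff, Finset.mem_union, YoungDiagram.mem_cells]
    have hβγ : β ≤ γ := hstripβγ.1
    constructor
    · rintro ⟨h1, h2⟩
      by_cases h3 : c ∈ β
      · exact Or.inr ⟨h3, h2⟩
      · exact Or.inl ⟨h1, h3⟩
    · rintro (⟨h1, h2⟩ | ⟨h1, h2⟩)
      · exact ⟨h1, fun hc => h2 (hρβ hc)⟩
      · exact ⟨hβγ h1, h2⟩
  have hcard_un : (resSet k ρ γ).card + (resSet k β γ ∩ resSet k ρ β).card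
      = (r - m) + m := by
    rw [hun, Finset.card_union_add_card_inter, hcardβγ]
  have hrm : r - m + m = r := Nat.sub_add_cancel hmr
  -- sandwich
  have h6 : pSize k ρ + r ≤ pSize k γ := by
    rw [hpsize]
    omega
  have h7 : (resSet k ρ γ).card ≤ r := by omega
  have h8 : r ≤ (resSet k ρ γ).card := by omega
  have h9 : (resSet k β γ ∩ resSet k ρ β).card = 0 := by omega
  refine ⟨?_, by omega⟩
  rw [Finset.disjoint_iff_inter_eq_empty]
  exact Finset.card_eq_zero.1 h9

end AffineKTheory
end
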